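/- arXiv:1311.2032 — 5 statements merged into one kernel-verified Lean document; each statement's English description precedes it below -/
import Mathlib

section
/- Let P be a finite set of points in ℝ², let p_j ∈ P, and let p_i ∈ P∖{p_j} be a nearest neighbor of p_j, i.e., ‖p_j − p_i‖ = min_{r ∈ P∖{p_j}} ‖p_j − r‖. Let l ∈ {0,…,5} be such that p_j ∈ W_l(p_i). Then p_j has the minimum b_l-coordinate among the points of P in W_l(p_i): ⟨p_j − p_i, b_l⟩ = min_{p_k ∈ V_l(p_i)} ⟨p_k − p_i, b_l⟩. -/
/- Common geometric setup: the Euclidean plane, wedges `W_l`, bisectors `b_l`,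
equilateral triangles `∆_l` and `l`-tri's, circular sectors `σ_l` and `l`-pies,
and the proximity graphs (Semi-Yao, nearest-neighbor, Equilateral/Pie Delaunay,
Yao) together with Euclidean minimum spanning trees. -/

open Real EuclideanGeometry
open scoped RealInnerProductSpace

noncomputable section

abbrev E : Type := EuclideanSpace ℝ (Fin 2)

/-- The point `(a, b)` in the Euclidean plane. -/
def pt (a b : ℝ) : E := (WithLp.equiv 2 (Fin 2 → ℝ)).symm ![a, b]

/-- The unit vector at polar angle `θ`. -/
def dir (θ : ℝ) : E := pt (Real.cos θ) (Real.sin θ)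

/-- The lower boundary angle `(2l-1)π/6` of the `l`-th wedge. -/
def lo (l : Fin 6) : ℝ := (2 * ((l : ℕ) : ℝ) - 1) * π / 6

/-- The upper boundary angle `(2l+1)π/6` of the `l`-th wedge. -/
def hi (l : Fin 6) : ℝ := (2 * ((l : ℕ) : ℝ) + 1) * π / 6

/-- The half-open wedge `W_l`: all nonzero points whose polar angle (mod `2π`)
lies in `[(2l-1)π/6, (2l+1)π/6)`. -/
def wedge (l : Fin 6) : Set E :=
  {x | x ≠ 0 ∧ ∃ θ : ℝ, lo l ≤ θ ∧ θ < hi l ∧ x = ‖x‖ • dir θ}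

/-- `W_l(p)`, the translate of `W_l` with apex `p`. -/
def wedgeAt (l : Fin 6) (p : E) : Set E := {x | x - p ∈ wedge l}

/-- The unit bisector vector `b_l = (cos(lπ/3), sin(lπ/3))` of `W_l`. -/
def bvec (l : Fin 6) : E := dir (((l : ℕ) : ℝ) * π / 3)

/-- `V_l(p) = P ∩ W_l(p)`. -/
def Vl (P : Finset E) (l : Fin 6) (p : E) : Set E := {x | x ∈ P ∧ x ∈ wedgeAt l p}

/-- The closed equilateral triangle `∆_l` with vertices `0`, `dir ((2l-1)π/6)`,
`dir ((2l+1)π/6)`. -/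
def tri (l : Fin 6) : Set E := convexHull ℝ {0, dir (lo l), dir (hi l)}

/-- The vertex set of `∆_l`. -/
def triVerts (l : Fin 6) : Set E := {0, dir (lo l), dir (hi l)}

/-- The `l`-tri `c + lam • ∆_l`. -/
def lTri (l : Fin 6) (c : E) (lam : ℝ) : Set E := (fun x => c + lam • x) '' tri l

/-- The closed circular sector (piece of pie) `σ_l` of the unit disk. -/
def sector (l : Fin 6) : Set E :=
  {x | ‖x‖ ≤ 1 ∧ (x = 0 ∨ ∃ θ : ℝ, lo l ≤ θ ∧ θ ≤ hi l ∧ x = ‖x‖ • dir θ)}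

/-- The `l`-pie `c + lam • σ_l`. -/
def lPie (l : Fin 6) (c : E) (lam : ℝ) : Set E := (fun x => c + lam • x) '' sector l

/-- Directed Semi-Yao graph edge from `a` to `b`: `a ∈ V_l(b)` for some `l` and `a`
has the minimum `b_l`-coordinate among the points of `V_l(b)`. -/
def SYG (P : Finset E) (a b : E) : Prop :=
  b ∈ P ∧ ∃ l : Fin 6, a ∈ Vl P l b ∧
    ∀ r ∈ Vl P l b, ⟪a - b, bvec l⟫ ≤ ⟪r - b, bvec l⟫

/-- Undirected Semi-Yao graph edge. -/
def SYGu (P : Finset E) (p q : E) : Prop := SYG P p q ∨ SYG P q p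

/-- Directed nearest-neighbor graph edge from `a` to `b`: `b ∈ P \ {a}` and
`‖a - b‖ = min_{r ∈ P \ {a}} ‖a - r‖`. -/
def NNG (P : Finset E) (a b : E) : Prop :=
  a ∈ P ∧ b ∈ P ∧ b ≠ a ∧ ∀ r ∈ P, r ≠ a → ‖a - b‖ ≤ ‖a - r‖

/-- Edge of the Equilateral Delaunay triangulation `EDT_l(P)`: there is an `l`-tri,
empty with respect to `P`, with both endpoints on its boundary. -/
def EDT (P : Finset E) (l : Fin 6) (p q : E) : Prop :=
  p ∈ P ∧ q ∈ P ∧ p ≠ q ∧ ∃ c : E, ∃ lam : ℝ, 0 < lam ∧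
    p ∈ frontier (lTri l c lam) ∧ q ∈ frontier (lTri l c lam) ∧
    ∀ r ∈ P, r ∉ interior (lTri l c lam)

/-- Edge of the Equilateral Delaunay graph `EDG(P) = EDT_0(P) ∪ EDT_1(P)`. -/
def EDG (P : Finset E) (p q : E) : Prop := EDT P 0 p q ∨ EDT P 1 p q

/-- Directed Yao-graph edge from `p` to `q`: `q ∈ V_l(p)` for some `l` and
`‖p - q‖ = min_{r ∈ V_l(p)} ‖p - r‖`. -/
def YG (P : Finset E) (p q : E) : Prop :=
  p ∈ P ∧ ∃ l : Fin 6, q ∈ Vl P l p ∧ ∀ r ∈ Vl P l p, ‖p - q‖ ≤ ‖p - r‖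

/-- Edge of the Pie Delaunay triangulation `PDT_l(P)`: there is an `l`-pie, empty
with respect to `P`, with both endpoints on its boundary. -/
def PDT (P : Finset E) (l : Fin 6) (p q : E) : Prop :=
  p ∈ P ∧ q ∈ P ∧ p ≠ q ∧ ∃ c : E, ∃ lam : ℝ, 0 < lam ∧
    p ∈ frontier (lPie l c lam) ∧ q ∈ frontier (lPie l c lam) ∧
    ∀ r ∈ P, r ∉ interior (lPie l c lam)

/-- Edge of the Pie Delaunay graph `PDG(P) = PDT_0(P) ∪ ⋯ ∪ PDT_5(P)`. -/
def PDG (P : Finset E) (p q : E) : Prop := ∃ l : Fin 6, PDT P l p q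

/-- Total Euclidean edge weight of a graph on the points of `P`. -/
def edgeWeight (P : Finset E) (G : SimpleGraph {x // x ∈ P}) : ℝ :=
  ∑ e ∈ G.edgeSet.toFinite.toFinset,
    Sym2.lift ⟨fun (a b : {x // x ∈ P}) => ‖(a : E) - (b : E)‖,
      fun _ _ => norm_sub_rev _ _⟩ e

/-- `T` is a Euclidean minimum spanning tree of `P`: a spanning tree (connected and
acyclic graph on the vertex set `P`) of minimum total Euclidean edge weight. -/
def IsEMST (P : Finset E) (T : SimpleGraph {x // x ∈ P}) : Prop :=
  T.IsTree ∧ ∀ G : SimpleGraph {x // x ∈ P}, G.IsTree → edgeWeight P T ≤ edgeWeight P G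



lemma inner_pt' (a b c d : ℝ) : ⟪pt a b, pt c d⟫ = a * c + b * d := by
  simp [pt, PiLp.inner_apply, Fin.sum_univ_two]; ring

lemma inner_dir' (a b : ℝ) : ⟪dir a, dir b⟫ = Real.cos (a - b) := by
  simp only [dir, inner_pt', Real.cos_sub]

lemma norm_dir' (θ : ℝ) : ‖dir θ‖ = 1 := by
  have h : ⟪dir θ, dir θ⟫ = 1 := by rw [inner_dir']; simp
  have h2 := real_inner_self_eq_norm_sq (dir θ)
  nlinarith [norm_nonneg (dir θ)]

lemma cos_sum_trig (x y : ℝ) :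
    Real.cos x + Real.cos (x - 2 * y) = 2 * Real.cos (x - y) * Real.cos y := by
  have h1 := Real.cos_add (x - y) y
  have h2 := Real.cos_sub (x - y) y
  have e1 : x - y + y = x := by ring
  have e2 : x - y - y = x - 2 * y := by ring
  rw [e1] at h1
  rw [e2] at h2
  linarith

lemma key_calc (nu nv A B : ℝ) (hnu : 0 < nu) (hnv : 0 < nv)
    (hA1 : -(π / 6) ≤ A) (hA2 : A < π / 6) (hB1 : -(π / 6) ≤ B) (hB2 : B < π / 6)
    (h : nv * Real.cos B ≤ nu * Real.cos A) :
    nu ^ 2 - 2 * (nu * nv * Real.cos (A - B)) + nv ^ 2 < nu ^ 2 := by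
  have hpi : 0 < π := Real.pi_pos
  have hcB : 0 < Real.cos B := Real.cos_pos_of_mem_Ioo ⟨by linarith, by linarith⟩
  have hc2 : 0 < Real.cos (A - 2 * B) :=
    Real.cos_pos_of_mem_Ioo ⟨by linarith, by linarith⟩
  have htrig := cos_sum_trig A B
  have h1 : nu * Real.cos A < nu * (2 * Real.cos (A - B) * Real.cos B) := by
    rw [← htrig]
    have : Real.cos A < Real.cos A + Real.cos (A - 2 * B) := by linarith
    exact mul_lt_mul_of_pos_left this hnu
  have h2 : nv * Real.cos B < (2 * nu * Real.cos (A - B)) * Real.cos B := by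
    calc nv * Real.cos B ≤ nu * Real.cos A := h
    _ < nu * (2 * Real.cos (A - B) * Real.cos B) := h1
    _ = (2 * nu * Real.cos (A - B)) * Real.cos B := by ring
  have hlt : nv < 2 * nu * Real.cos (A - B) := lt_of_mul_lt_mul_right h2 hcB.le
  nlinarith [mul_pos hnv (sub_pos.mpr hlt)]

lemma wedge_key (l : Fin 6) (u v : E) (hu : u ∈ wedge l) (hv : v ∈ wedge l)
    (h : ⟪v, bvec l⟫ ≤ ⟪u, bvec l⟫) : ‖u - v‖ < ‖u‖ := by
  obtain ⟨hu0, α, hα1, hα2, hue⟩ := hu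
  obtain ⟨hv0, β, hβ1, hβ2, hve⟩ := hv
  have hc : bvec l = dir (((l : ℕ) : ℝ) * π / 3) := rfl
  have hlo : lo l = ((l : ℕ) : ℝ) * π / 3 - π / 6 := by rw [lo]; ring
  have hhi : hi l = ((l : ℕ) : ℝ) * π / 3 + π / 6 := by rw [hi]; ring
  rw [hlo] at hα1 hβ1
  rw [hhi] at hα2 hβ2
  have hnup : 0 < ‖u‖ := norm_pos_iff.mpr hu0
  have hnvp : 0 < ‖v‖ := norm_pos_iff.mpr hv0
  have hiu : ⟪u, bvec l⟫ = ‖u‖ * Real.cos (α - ((l : ℕ) : ℝ) * π / 3) := by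
    conv_lhs => rw [hc, hue]
    rw [real_inner_smul_left, inner_dir']
  have hiv : ⟪v, bvec l⟫ = ‖v‖ * Real.cos (β - ((l : ℕ) : ℝ) * π / 3) := by
    conv_lhs => rw [hc, hve]
    rw [real_inner_smul_left, inner_dir']
  have hiuv : ⟪u, v⟫ = ‖u‖ * ‖v‖ *
      Real.cos ((α - ((l : ℕ) : ℝ) * π / 3) - (β - ((l : ℕ) : ℝ) * π / 3)) := by
    conv_lhs => rw [hue, hve]
    rw [real_inner_smul_left, real_inner_smul_right, inner_dir',
      show α - β = (α - ((l : ℕ) : ℝ) * π / 3) - (β - ((l : ℕ) : ℝ) * π / 3) by ring]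
    ring
  rw [hiu, hiv] at h
  have hsq : ‖u - v‖ ^ 2 < ‖u‖ ^ 2 := by
    rw [norm_sub_sq_real, hiuv]
    exact key_calc ‖u‖ ‖v‖ _ _ hnup hnvp (by linarith) (by linarith) (by linarith)
      (by linarith) h
  exact lt_of_pow_lt_pow_left₀ 2 hnup.le hsq

/-- if `p_i` is a nearest neighbor of `p_j` in `P` and `p_j ∈ W_l(p_i)`,
then `p_j` has the minimum `b_l`-coordinate among the points of `V_l(p_i)`. -/
theorem nearest_neighbor_min_bisector_coordinate
    (P : Finset E) (pj pi : E) (hj : pj ∈ P) (hi : pi ∈ P) (hne : pi ≠ pj)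
    (hnn : ∀ r ∈ P, r ≠ pj → ‖pj - pi‖ ≤ ‖pj - r‖)
    (l : Fin 6) (hw : pj ∈ wedgeAt l pi) :
    ∀ pk ∈ Vl P l pi, ⟪pj - pi, bvec l⟫ ≤ ⟪pk - pi, bvec l⟫ := by
  intro pk hk
  by_contra hcon
  push_neg at hcon
  obtain ⟨hkP, hkw⟩ := hk
  have hkj : pk ≠ pj := by
    rintro rfl
    exact lt_irrefl _ hcon
  have key : ‖(pj - pi) - (pk - pi)‖ < ‖pj - pi‖ := wedge_key l _ _ hw hkw hcon.le
  have h2 : ‖pj - pk‖ < ‖pj - pi‖ := by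
    have he : (pj - pi) - (pk - pi) = pj - pk := by abel
    rwa [he] at key
  exact absurd (hnn pk hkP hkj) (not_le.mpr h2)
end
end

section
/- Let P ⊆ ℝ² be finite, let p, q ∈ P be distinct, and let l ∈ {0,…,5}. If there exists an l-tri that is empty with respect to P and has both p and q on its boundary, then there exists an l-tri T′ that is empty with respect to P, has both p and q on its boundary, and has p or q as one of its three vertices. -/
/- Common geometric setup: the Euclidean plane, wedges `W_l`, bisectors `b_l`,
equilateral triangles `∆_l` and `l`-tri's, circular sectors `σ_l` and `l`-pies,
and the proximity graphs (Semi-Yao, nearest-neighbor, Equilateral/Pie Delaunay,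
Yao) together with Euclidean minimum spanning trees. -/

open Real EuclideanGeometry
open scoped RealInnerProductSpace

noncomputable section

section AuxEmptyTri

lemma aux_lin_indep_dir (θ : ℝ) : LinearIndependent ℝ ![dir θ, dir (θ + π/3)] := by
  rw [LinearIndependent.pair_iff]
  intro s t hst
  have h0 : s * Real.cos θ + t * Real.cos (θ + π/3) = 0 := by
    have := congrArg (fun v : E => v 0) hst; simpa [dir, pt] using this
  have h1 : s * Real.sin θ + t * Real.sin (θ + π/3) = 0 := by
    have := congrArg (fun v : E => v 1) hst; simpa [dir, pt] using this
  have hs := Real.sin_sub (θ + π/3) θ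
  rw [show θ + π/3 - θ = π/3 by ring, Real.sin_pi_div_three] at hs
  have h3 : Real.sqrt 3 / 2 ≠ 0 := by positivity
  have hs0 : s * (Real.sqrt 3 / 2) = 0 := by
    linear_combination Real.sin (θ+π/3) * h0 - Real.cos (θ+π/3) * h1 + s * hs
  have ht0 : t * (Real.sqrt 3 / 2) = 0 := by
    linear_combination (- Real.sin θ) * h0 + Real.cos θ * h1 + t * hs
  exact ⟨by simpa [h3] using mul_eq_zero.mp hs0, by simpa [h3] using mul_eq_zero.mp ht0⟩

lemma aux_affind (θ : ℝ) : AffineIndependent ℝ ![(0:E), dir θ, dir (θ + π/3)] := by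
  rw [affineIndependent_iff_linearIndependent_vsub ℝ _ 0]
  let e : Fin 2 ≃ {x : Fin 3 // x ≠ 0} :=
    { toFun := ![⟨1, by decide⟩, ⟨2, by decide⟩]
      invFun := fun x => ![0, 0, 1] x.1
      left_inv := by intro i; fin_cases i <;> rfl
      right_inv := by rintro ⟨i, hi⟩; fin_cases i <;> first | exact absurd rfl hi | rfl }
  refine (linearIndependent_equiv e).mp ?_
  have h : ((fun i : {x : Fin 3 // x ≠ 0} =>
      ![(0:E), dir θ, dir (θ + π/3)] i -ᵥ ![(0:E), dir θ, dir (θ + π/3)] 0) ∘ e)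
      = ![dir θ, dir (θ + π/3)] := by
    funext i; fin_cases i <;> simp [e]
  rw [h]; exact aux_lin_indep_dir θ

lemma aux_spantop (θ : ℝ) : affineSpan ℝ (Set.range ![(0:E), dir θ, dir (θ + π/3)]) = ⊤ := by
  set v : Fin 3 → E := ![(0:E), dir θ, dir (θ + π/3)] with hv
  have hne : (Set.range v).Nonempty := Set.range_nonempty v
  rw [AffineSubspace.affineSpan_eq_top_iff_vectorSpan_eq_top_of_nonempty ℝ E E hne]
  have h1 : Submodule.span ℝ (Set.range ![dir θ, dir (θ + π/3)]) = ⊤ :=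
    (aux_lin_indep_dir θ).span_eq_top_of_card_eq_finrank (by simp)
  rw [eq_top_iff, ← h1, Submodule.span_le]
  rintro x ⟨i, rfl⟩
  have m0 : v 0 ∈ Set.range v := Set.mem_range_self 0
  have m1 : v 1 ∈ Set.range v := Set.mem_range_self 1
  have m2 : v 2 ∈ Set.range v := Set.mem_range_self 2
  have k1 : v 1 -ᵥ v 0 ∈ vectorSpan ℝ (Set.range v) := vsub_mem_vectorSpan ℝ m1 m0
  have k2 : v 2 -ᵥ v 0 ∈ vectorSpan ℝ (Set.range v) := vsub_mem_vectorSpan ℝ m2 m0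
  have e1 : v 1 -ᵥ v 0 = dir θ := by simp [hv]
  have e2 : v 2 -ᵥ v 0 = dir (θ + π/3) := by simp [hv]
  rw [e1] at k1; rw [e2] at k2
  fin_cases i
  · exact k1
  · exact k2

def auxTriB (θ : ℝ) : AffineBasis (Fin 3) ℝ E := ⟨![0, dir θ, dir (θ+π/3)], aux_affind θ, aux_spantop θ⟩

lemma auxTriB_range (θ : ℝ) : Set.range (auxTriB θ) = {(0:E), dir θ, dir (θ+π/3)} := by
  show Set.range ![(0:E), dir θ, dir (θ+π/3)] = _
  ext x
  constructor
  · rintro ⟨i, rfl⟩; fin_cases i <;> simp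
  · intro hx
    rcases hx with h | h | h
    exacts [⟨0, h.symm⟩, ⟨1, h.symm⟩, ⟨2, h.symm⟩]

lemma aux_frontier_tri_sub (θ : ℝ) :
    frontier (convexHull ℝ {(0:E), dir θ, dir (θ+π/3)}) ⊆
      segment ℝ 0 (dir θ) ∪ segment ℝ 0 (dir (θ+π/3)) ∪ segment ℝ (dir θ) (dir (θ+π/3)) := by
  intro x hx
  set b := auxTriB θ with hb
  rw [← auxTriB_range θ] at hx
  have hclosed : IsClosed (convexHull ℝ (Set.range ⇑b)) :=
    ((Set.finite_range _).isCompact_convexHull (𝕜 := ℝ)).isClosed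
  rw [frontier, hclosed.closure_eq] at hx
  obtain ⟨hmem, hnint⟩ := hx
  rw [b.interior_convexHull] at hnint
  rw [b.convexHull_eq_nonneg_coord] at hmem
  simp only [Set.mem_setOf_eq, not_forall, not_lt] at hnint
  obtain ⟨i, hi⟩ := hnint
  have hiz : b.coord i x = 0 := le_antisymm hi (hmem i)
  have hsum := b.sum_coord_apply_eq_one x
  rw [Fin.sum_univ_three] at hsum
  have hcomb := b.linear_combination_coord_eq_self x
  rw [Fin.sum_univ_three] at hcomb
  have b0 : b 0 = 0 := rfl
  have b1 : b 1 = dir θ := rfl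
  have b2 : b 2 = dir (θ+π/3) := rfl
  fin_cases i
  · right
    have h0z : b.coord 0 x = 0 := hiz
    refine ⟨b.coord 1 x, b.coord 2 x, hmem 1, hmem 2, by linarith, ?_⟩
    conv_rhs => rw [← hcomb]
    rw [h0z, b0, b1, b2]; simp
  · left; right
    have h1z : b.coord 1 x = 0 := hiz
    refine ⟨b.coord 0 x, b.coord 2 x, hmem 0, hmem 2, by linarith, ?_⟩
    conv_rhs => rw [← hcomb]
    rw [h1z, b0, b1, b2]; simp
  · left; left
    have h2z : b.coord 2 x = 0 := hiz
    refine ⟨b.coord 0 x, b.coord 1 x, hmem 0, hmem 1, by linarith, ?_⟩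
    conv_rhs => rw [← hcomb]
    rw [h2z, b0, b1, b2]; simp

lemma aux_hi_eq (l : Fin 6) : hi l = lo l + π/3 := by
  unfold lo hi; ring

lemma aux_tri_convex (l : Fin 6) : Convex ℝ (tri l) := convex_convexHull ℝ _

lemma aux_triVerts_subset (l : Fin 6) : triVerts l ⊆ tri l := subset_convexHull ℝ _

lemma aux_isClosed_lTri (l : Fin 6) (c : E) (lam : ℝ) : IsClosed (lTri l c lam) := by
  have hcpt : IsCompact (tri l) :=
    (Set.toFinite {(0:E), dir (lo l), dir (hi l)}).isCompact_convexHull (𝕜 := ℝ)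
  exact (hcpt.image (continuous_const.add (continuous_const_smul lam))).isClosed

lemma aux_frontier_lTri (l : Fin 6) (c : E) (lam : ℝ) (hlam : 0 < lam) :
    frontier (lTri l c lam) = (fun x => c + lam • x) '' frontier (tri l) := by
  let φ : E ≃ₜ E := (Homeomorph.smulOfNeZero lam hlam.ne').trans (Homeomorph.addLeft c)
  have hφ : ⇑φ = fun x => c + lam • x := rfl
  rw [lTri, ← hφ, ← Homeomorph.image_frontier]

lemma aux_seg_param {x y z : E} (h : z ∈ segment ℝ x y) :
    ∃ t : ℝ, 0 ≤ t ∧ t ≤ 1 ∧ z = x + t • (y - x) := by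
  rw [segment_eq_image'] at h
  obtain ⟨t, ⟨h0, h1⟩, he⟩ := h
  exact ⟨t, h0, h1, he.symm⟩

lemma aux_key (P : Finset E) (l : Fin 6) (c : E) (lam : ℝ) (hlam : 0 < lam)
    (hempty : ∀ r ∈ P, r ∉ interior (lTri l c lam))
    (p q : E) (hne : p ≠ q)
    (hpf : p ∈ frontier (lTri l c lam)) (hqf : q ∈ frontier (lTri l c lam))
    (V A B : E) (hV : V ∈ triVerts l) (hA : A ∈ triVerts l) (hB : B ∈ triVerts l)
    (t s : ℝ) (ht0 : 0 ≤ t) (ht1 : t ≤ 1) (hs0 : 0 ≤ s) (hs1 : s ≤ 1) (hts : t ≤ s)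
    (hp : p = c + lam • (V + t • (A - V))) (hq : q = c + lam • (V + s • (B - V))) :
    ∃ c' : E, ∃ lam' : ℝ, 0 < lam' ∧ (∀ r ∈ P, r ∉ interior (lTri l c' lam')) ∧
      p ∈ frontier (lTri l c' lam') ∧ q ∈ frontier (lTri l c' lam') ∧
      (p ∈ (fun x => c' + lam' • x) '' triVerts l ∨
        q ∈ (fun x => c' + lam' • x) '' triVerts l) := by
  have hVt : V ∈ tri l := aux_triVerts_subset l hV
  have hAt : A ∈ tri l := aux_triVerts_subset l hA
  have hBt : B ∈ tri l := aux_triVerts_subset l hB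
  have hs : 0 < s := by
    rcases lt_or_eq_of_le hs0 with h | h
    · exact h
    · exfalso; apply hne
      have ht : t = 0 := le_antisymm (h ▸ hts) ht0
      rw [hp, hq, ht, ← h]; simp
  obtain ⟨r, hr0, hr1, hrt⟩ : ∃ r : ℝ, 0 ≤ r ∧ r ≤ 1 ∧ t = s * r :=
    ⟨t/s, div_nonneg ht0 hs.le, (div_le_one hs).2 hts, by field_simp⟩
  subst hrt
  have hsub : lTri l (c + (lam * (1 - s)) • V) (lam * s) ⊆ lTri l c lam := by
    rintro _ ⟨y, hy, rfl⟩
    refine ⟨(1 - s) • V + s • y,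
      aux_tri_convex l hVt hy (by linarith) hs.le (by ring), ?_⟩
    show c + lam • ((1 - s) • V + s • y) = c + (lam * (1 - s)) • V + (lam * s) • y
    module
  have hpmemt : V + r • (A - V) ∈ tri l := by
    refine (aux_tri_convex l).segment_subset hVt hAt ?_
    rw [segment_eq_image']
    exact ⟨r, ⟨hr0, hr1⟩, rfl⟩
  have hpeq : c + (lam * (1 - s)) • V + (lam * s) • (V + r • (A - V)) = p := by
    rw [hp]; module
  have hqeq : c + (lam * (1 - s)) • V + (lam * s) • B = q := by
    rw [hq]; module
  have hpmem : p ∈ lTri l (c + (lam * (1 - s)) • V) (lam * s) :=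
    ⟨V + r • (A - V), hpmemt, hpeq⟩
  have hqmem : q ∈ lTri l (c + (lam * (1 - s)) • V) (lam * s) := ⟨B, hBt, hqeq⟩
  have hclosed' : IsClosed (lTri l (c + (lam * (1 - s)) • V) (lam * s)) :=
    aux_isClosed_lTri l _ _
  have hclosed : IsClosed (lTri l c lam) := aux_isClosed_lTri l c lam
  rw [hclosed.frontier_eq] at hpf hqf
  refine ⟨c + (lam * (1 - s)) • V, lam * s, mul_pos hlam hs, ?_, ?_, ?_,
    Or.inr ⟨B, hB, hqeq⟩⟩
  · intro x hx hxi
    exact hempty x hx (interior_mono hsub hxi)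
  · rw [hclosed'.frontier_eq]
    exact ⟨hpmem, fun hh => hpf.2 (interior_mono hsub hh)⟩
  · rw [hclosed'.frontier_eq]
    exact ⟨hqmem, fun hh => hqf.2 (interior_mono hsub hh)⟩

end AuxEmptyTri


lemma aux_key2 (P : Finset E) (l : Fin 6) (c : E) (lam : ℝ) (hlam : 0 < lam)
    (hempty : ∀ r ∈ P, r ∉ interior (lTri l c lam))
    (p q : E) (hne : p ≠ q)
    (hpf : p ∈ frontier (lTri l c lam)) (hqf : q ∈ frontier (lTri l c lam))
    (V A B : E) (hV : V ∈ triVerts l) (hA : A ∈ triVerts l) (hB : B ∈ triVerts l)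
    (t s : ℝ) (ht0 : 0 ≤ t) (ht1 : t ≤ 1) (hs0 : 0 ≤ s) (hs1 : s ≤ 1)
    (hp : p = c + lam • (V + t • (A - V))) (hq : q = c + lam • (V + s • (B - V))) :
    ∃ c' : E, ∃ lam' : ℝ, 0 < lam' ∧ (∀ r ∈ P, r ∉ interior (lTri l c' lam')) ∧
      p ∈ frontier (lTri l c' lam') ∧ q ∈ frontier (lTri l c' lam') ∧
      (p ∈ (fun x => c' + lam' • x) '' triVerts l ∨
        q ∈ (fun x => c' + lam' • x) '' triVerts l) := by
  rcases le_total t s with h | h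
  · exact aux_key P l c lam hlam hempty p q hne hpf hqf V A B hV hA hB t s ht0 ht1 hs0 hs1 h hp hq
  · obtain ⟨c', lam', h1, h2, h3, h4, h5⟩ :=
      aux_key P l c lam hlam hempty q p hne.symm hqf hpf V B A hV hB hA s t hs0 hs1 ht0 ht1 h hq hp
    exact ⟨c', lam', h1, h2, h4, h3, h5.symm⟩

/-- if some empty `l`-tri has both `p` and `q` on its boundary, then there
is an empty `l`-tri having both on its boundary and `p` or `q` among its three vertices. -/
theorem empty_lTri_can_have_point_as_vertex
    (P : Finset E) (p q : E) (hp : p ∈ P) (hq : q ∈ P) (hne : p ≠ q) (l : Fin 6)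
    (h : ∃ c : E, ∃ lam : ℝ, 0 < lam ∧ (∀ r ∈ P, r ∉ interior (lTri l c lam)) ∧
      p ∈ frontier (lTri l c lam) ∧ q ∈ frontier (lTri l c lam)) :
    ∃ c : E, ∃ lam : ℝ, 0 < lam ∧ (∀ r ∈ P, r ∉ interior (lTri l c lam)) ∧
      p ∈ frontier (lTri l c lam) ∧ q ∈ frontier (lTri l c lam) ∧
      (p ∈ (fun x => c + lam • x) '' triVerts l ∨
        q ∈ (fun x => c + lam • x) '' triVerts l) := by
  obtain ⟨c, lam, hlam, hempty, hpf, hqf⟩ := h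
  have hfr := aux_frontier_lTri l c lam hlam
  have hpF := hpf
  have hqF := hqf
  rw [hfr] at hpF hqF
  obtain ⟨p', hp', hpe0⟩ := hpF
  obtain ⟨q', hq', hqe0⟩ := hqF
  have hpe : c + lam • p' = p := hpe0
  have hqe : c + lam • q' = q := hqe0
  set u := dir (lo l) with hu
  set w := dir (hi l) with hw
  have hw' : dir (lo l + π/3) = w := by rw [hw, aux_hi_eq]
  have htri : tri l = convexHull ℝ {(0:E), u, w} := rfl
  have hV0 : (0:E) ∈ triVerts l := Or.inl rfl
  have hVu : u ∈ triVerts l := Or.inr (Or.inl rfl)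
  have hVw : w ∈ triVerts l := Or.inr (Or.inr rfl)
  have hsub := aux_frontier_tri_sub (lo l)
  rw [hw'] at hsub
  have hp'' := hsub (htri ▸ hp')
  have hq'' := hsub (htri ▸ hq')
  clear hsub hp' hq' hpe0 hqe0 hfr
  rcases hp'' with (h1 | h2) | h3 <;> rcases hq'' with (k1 | k2) | k3
  · obtain ⟨t, ht0, ht1, hpt⟩ := aux_seg_param h1
    obtain ⟨s, hs0, hs1, hqt⟩ := aux_seg_param k1
    exact aux_key2 P l c lam hlam hempty p q hne hpf hqf 0 u u hV0 hVu hVu t s ht0 ht1 hs0 hs1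
      (by rw [← hpe, hpt]) (by rw [← hqe, hqt])
  · obtain ⟨t, ht0, ht1, hpt⟩ := aux_seg_param h1
    obtain ⟨s, hs0, hs1, hqt⟩ := aux_seg_param k2
    exact aux_key2 P l c lam hlam hempty p q hne hpf hqf 0 u w hV0 hVu hVw t s ht0 ht1 hs0 hs1
      (by rw [← hpe, hpt]) (by rw [← hqe, hqt])
  · rw [segment_symm] at h1
    obtain ⟨t, ht0, ht1, hpt⟩ := aux_seg_param h1
    obtain ⟨s, hs0, hs1, hqt⟩ := aux_seg_param k3
    exact aux_key2 P l c lam hlam hempty p q hne hpf hqf u 0 w hVu hV0 hVw t s ht0 ht1 hs0 hs1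
      (by rw [← hpe, hpt]) (by rw [← hqe, hqt])
  · obtain ⟨t, ht0, ht1, hpt⟩ := aux_seg_param h2
    obtain ⟨s, hs0, hs1, hqt⟩ := aux_seg_param k1
    exact aux_key2 P l c lam hlam hempty p q hne hpf hqf 0 w u hV0 hVw hVu t s ht0 ht1 hs0 hs1
      (by rw [← hpe, hpt]) (by rw [← hqe, hqt])
  · obtain ⟨t, ht0, ht1, hpt⟩ := aux_seg_param h2
    obtain ⟨s, hs0, hs1, hqt⟩ := aux_seg_param k2
    exact aux_key2 P l c lam hlam hempty p q hne hpf hqf 0 w w hV0 hVw hVw t s ht0 ht1 hs0 hs1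
      (by rw [← hpe, hpt]) (by rw [← hqe, hqt])
  · rw [segment_symm] at h2 k3
    obtain ⟨t, ht0, ht1, hpt⟩ := aux_seg_param h2
    obtain ⟨s, hs0, hs1, hqt⟩ := aux_seg_param k3
    exact aux_key2 P l c lam hlam hempty p q hne hpf hqf w 0 u hVw hV0 hVu t s ht0 ht1 hs0 hs1
      (by rw [← hpe, hpt]) (by rw [← hqe, hqt])
  · rw [segment_symm] at k1
    obtain ⟨t, ht0, ht1, hpt⟩ := aux_seg_param h3
    obtain ⟨s, hs0, hs1, hqt⟩ := aux_seg_param k1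
    exact aux_key2 P l c lam hlam hempty p q hne hpf hqf u w 0 hVu hVw hV0 t s ht0 ht1 hs0 hs1
      (by rw [← hpe, hpt]) (by rw [← hqe, hqt])
  · rw [segment_symm] at h3 k2
    obtain ⟨t, ht0, ht1, hpt⟩ := aux_seg_param h3
    obtain ⟨s, hs0, hs1, hqt⟩ := aux_seg_param k2
    exact aux_key2 P l c lam hlam hempty p q hne hpf hqf w u 0 hVw hVu hV0 t s ht0 ht1 hs0 hs1
      (by rw [← hpe, hpt]) (by rw [← hqe, hqt])
  · obtain ⟨t, ht0, ht1, hpt⟩ := aux_seg_param h3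
    obtain ⟨s, hs0, hs1, hqt⟩ := aux_seg_param k3
    exact aux_key2 P l c lam hlam hempty p q hne hpf hqf u w w hVu hVw hVw t s ht0 ht1 hs0 hs1
      (by rw [← hpe, hpt]) (by rw [← hqe, hqt])
end
end

section
/- Let T = c + λ∆_l (with c ∈ ℝ², λ > 0) be an l-tri and let v be one of its three vertices. Then there exists k ∈ {l, (l+2) mod 6, (l+4) mod 6} such that T ⊆ v + closure(W_k); moreover, if v = c (the vertex of T corresponding to the vertex 0 of ∆_l), then one may take k = l. -/
/- Common geometric setup: the Euclidean plane, wedges `W_l`, bisectors `b_l`,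
equilateral triangles `∆_l` and `l`-tri's, circular sectors `σ_l` and `l`-pies,
and the proximity graphs (Semi-Yao, nearest-neighbor, Equilateral/Pie Delaunay,
Yao) together with Euclidean minimum spanning trees. -/

open Real EuclideanGeometry
open scoped RealInnerProductSpace

noncomputable section

lemma dir_apply_zero (θ : ℝ) : dir θ 0 = Real.cos θ := rfl
lemma dir_apply_one (θ : ℝ) : dir θ 1 = Real.sin θ := rfl

lemma E_ext {x y : E} (h0 : x 0 = y 0) (h1 : x 1 = y 1) : x = y := by
  ext i
  fin_cases i
  · exact h0
  · exact h1

lemma dir_add_pi (θ : ℝ) : dir (θ + π) = -dir θ := by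
  apply E_ext <;>
    simp [dir_apply_zero, dir_apply_one, Real.cos_add, Real.sin_add, dir, pt,
      WithLp.equiv_symm_apply, PiLp.toLp_apply]

lemma dir_add_int_two_pi (θ : ℝ) (m : ℤ) : dir (θ + m * (2 * π)) = dir θ := by
  apply E_ext <;>
    simp [dir_apply_zero, dir_apply_one, Real.cos_add_int_mul_two_pi,
      Real.sin_add_int_mul_two_pi]

lemma dir_A (θ : ℝ) : dir (θ + 2 * π / 3) = dir (θ + π / 3) - dir θ := by
  have h3 : (Real.sqrt 3)^2 = 3 := Real.sq_sqrt (by norm_num)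
  apply E_ext
  · rw [PiLp.sub_apply]
    rw [show θ + 2 * π / 3 = (θ + π/3) + π/3 by ring]
    simp only [dir_apply_zero, dir_apply_one, Real.cos_add, Real.sin_add,
      Real.cos_pi_div_three, Real.sin_pi_div_three, dir, pt, WithLp.equiv_symm_apply, PiLp.toLp_apply]
    simp only [Matrix.cons_val_zero, Matrix.cons_val_one, Matrix.head_cons]
    linear_combination (-(Real.cos θ)/4) * h3
  · rw [PiLp.sub_apply]
    rw [show θ + 2 * π / 3 = (θ + π/3) + π/3 by ring]
    simp only [dir_apply_zero, dir_apply_one, Real.cos_add, Real.sin_add,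
      Real.cos_pi_div_three, Real.sin_pi_div_three, dir, pt, WithLp.equiv_symm_apply, PiLp.toLp_apply]
    simp only [Matrix.cons_val_zero, Matrix.cons_val_one, Matrix.head_cons]
    linear_combination (-(Real.sin θ)/4) * h3

lemma hi_eq (k : Fin 6) : hi k = lo k + π / 3 := by unfold lo hi; ring

set_option maxHeartbeats 1000000 in
lemma mem_wedge_comb (k : Fin 6) {s t : ℝ} (hs : 0 < s) (ht : 0 ≤ t) :
    s • dir (lo k) + t • dir (hi k) ∈ wedge k := by
  have h3 : (Real.sqrt 3)^2 = 3 := Real.sq_sqrt (by norm_num)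
  have h3n : (0:ℝ) ≤ Real.sqrt 3 := Real.sqrt_nonneg 3
  set a := lo k with ha
  set x : E := s • dir (lo k) + t • dir (hi k) with hx
  have hst : (0:ℝ) < s + t / 2 := by linarith
  set y : ℝ := (Real.sqrt 3 / 2 * t) / (s + t / 2) with hy
  have hynn : 0 ≤ y := by positivity
  set γ : ℝ := Real.arctan y with hγ
  have hx0 : x 0 = s * Real.cos a + t * Real.cos (a + π/3) := by
    simp [hx, dir_apply_zero, hi_eq, PiLp.add_apply, PiLp.smul_apply, smul_eq_mul, ha]
  have hx1 : x 1 = s * Real.sin a + t * Real.sin (a + π/3) := by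
    simp [hx, dir_apply_one, hi_eq, PiLp.add_apply, PiLp.smul_apply, smul_eq_mul, ha]
  set r : ℝ := Real.sqrt ((s + t/2)^2 + (Real.sqrt 3 / 2 * t)^2) with hr
  have hr2 : r^2 = (s + t/2)^2 + (Real.sqrt 3 / 2 * t)^2 := Real.sq_sqrt (by positivity)
  have hrpos : 0 < r := by
    rw [hr]; apply Real.sqrt_pos.2; positivity
  have hnorm : ‖x‖ = r := by
    rw [EuclideanSpace.norm_eq, Fin.sum_univ_two, hx0, hx1, Real.norm_eq_abs,
      Real.norm_eq_abs, sq_abs, sq_abs, hr]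
    congr 1
    have c1 := Real.sin_sq_add_cos_sq a
    have c2 := Real.sin_sq_add_cos_sq (a + π/3)
    rw [Real.cos_add, Real.sin_add, Real.cos_pi_div_three, Real.sin_pi_div_three]
    nlinarith [c1, c2, h3, Real.sin_sq_add_cos_sq a]
  -- r * cos γ = s + t/2 and r * sin γ = √3/2 * t
  have hsq : Real.sqrt (1 + y^2) = r / (s + t/2) := by
    rw [show 1 + y^2 = ((s + t/2)^2 + (Real.sqrt 3 / 2 * t)^2) / (s + t/2)^2 by
      rw [hy]; field_simp]
    rw [Real.sqrt_div (by positivity), Real.sqrt_sq hst.le]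
  have hcos : r * Real.cos γ = s + t/2 := by
    rw [hγ, Real.cos_arctan, hsq]
    field_simp
  have hsin : r * Real.sin γ = Real.sqrt 3 / 2 * t := by
    have h1 : r * Real.sin γ = y * (s + t/2) := by
      rw [hγ, Real.sin_arctan, hsq, div_div_eq_mul_div, mul_comm r,
        div_mul_cancel₀ _ hrpos.ne']
    rw [h1, hy, div_mul_cancel₀ _ hst.ne']
  refine ⟨?_, a + γ, ?_, ?_, ?_⟩
  · intro h0
    rw [h0, norm_zero] at hnorm
    exact hrpos.ne' hnorm.symm
  · have : Real.arctan 0 ≤ γ := Real.arctan_strictMono.monotone hynn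
    rw [Real.arctan_zero] at this
    linarith
  · rw [hi_eq]
    have : γ < π / 3 := by
      have hylt : y < Real.sqrt 3 := by
        rw [hy, div_lt_iff₀ hst]
        nlinarith
      have htan : Real.tan (π/3) = Real.sqrt 3 := by
        rw [Real.tan_eq_sin_div_cos, Real.sin_pi_div_three, Real.cos_pi_div_three]
        ring
      calc γ = Real.arctan y := hγ
        _ < Real.arctan (Real.sqrt 3) := Real.arctan_strictMono hylt
        _ = π / 3 := by
          rw [← htan, Real.arctan_tan (by linarith [Real.pi_pos]) (by linarith [Real.pi_pos])]
    linarith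
  · rw [hnorm]
    apply E_ext
    · rw [PiLp.smul_apply, dir_apply_zero, smul_eq_mul, hx0, Real.cos_add (a) γ]
      rw [Real.cos_add a (π/3), Real.cos_pi_div_three, Real.sin_pi_div_three]
      linear_combination (-Real.cos a) * hcos + (Real.sin a) * hsin
    · rw [PiLp.smul_apply, dir_apply_one, smul_eq_mul, hx1, Real.sin_add (a) γ]
      rw [Real.sin_add a (π/3), Real.cos_pi_div_three, Real.sin_pi_div_three]
      linear_combination (-Real.sin a) * hcos - (Real.cos a) * hsin

lemma mem_closure_wedge_comb (k : Fin 6) {s t : ℝ} (hs : 0 ≤ s) (ht : 0 ≤ t) :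
    s • dir (lo k) + t • dir (hi k) ∈ closure (wedge k) := by
  have h1 : Filter.Tendsto (fun n : ℕ => s + 1/(n+1:ℝ)) Filter.atTop (nhds s) := by
    simpa using tendsto_const_nhds.add (tendsto_one_div_add_atTop_nhds_zero_nat (𝕜 := ℝ))
  have htd : Filter.Tendsto (fun n : ℕ => (s + 1/(n+1:ℝ)) • dir (lo k) + t • dir (hi k))
      Filter.atTop (nhds (s • dir (lo k) + t • dir (hi k))) :=
    (h1.smul_const (dir (lo k))).add tendsto_const_nhds
  refine mem_closure_of_tendsto htd (Filter.Eventually.of_forall fun n => ?_)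
  exact mem_wedge_comb k (by positivity) ht

lemma lo_shift (l j : Fin 6) :
    ∃ m : ℤ, lo (l + j) = lo l + ((j : ℕ) : ℝ) * (π/3) + m * (2*π) := by
  set n : ℕ := ((l:ℕ) + (j:ℕ)) / 6 with hn
  refine ⟨-(n : ℤ), ?_⟩
  have hv : ((l + j : Fin 6) : ℕ) = ((l:ℕ) + (j:ℕ)) % 6 := Fin.val_add l j
  have h := Nat.mod_add_div ((l:ℕ)+(j:ℕ)) 6
  have h' : (((((l:ℕ)+(j:ℕ)) % 6 : ℕ)):ℝ) + 6*((n:ℕ):ℝ)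
      = ((l:ℕ):ℝ) + ((j:ℕ):ℝ) := by exact_mod_cast congrArg (Nat.cast (R := ℝ)) h
  have hc : (((-(n:ℤ)):ℤ):ℝ) = -((n:ℕ):ℝ) := by push_cast; ring
  unfold lo
  rw [hv, hc]
  linear_combination (π/3) * h'

lemma dir_lo_shift (l j : Fin 6) : dir (lo (l + j)) = dir (lo l + ((j:ℕ):ℝ) * (π/3)) := by
  obtain ⟨m, hm⟩ := lo_shift l j
  rw [hm, dir_add_int_two_pi]

lemma dir_hi_shift (l j : Fin 6) : dir (hi (l + j)) = dir (hi l + ((j:ℕ):ℝ) * (π/3)) := by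
  obtain ⟨m, hm⟩ := lo_shift l j
  rw [hi_eq, hm, show lo l + ((j:ℕ):ℝ)*(π/3) + m*(2*π) + π/3
      = (lo l + π/3 + ((j:ℕ):ℝ)*(π/3)) + m*(2*π) by ring, dir_add_int_two_pi, hi_eq]

lemma dirA' (l : Fin 6) : dir (lo (l+2)) = dir (hi l) - dir (lo l) := by
  rw [dir_lo_shift, show lo l + (((2:Fin 6):ℕ):ℝ)*(π/3) = lo l + 2*π/3 by rw [show (((2:Fin 6):ℕ):ℝ) = 2 from by norm_num]; ring,
    dir_A, hi_eq]

lemma dirB' (l : Fin 6) : dir (hi (l+2)) = -dir (lo l) := by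
  rw [dir_hi_shift, show hi l + (((2:Fin 6):ℕ):ℝ)*(π/3) = lo l + π by
    rw [hi_eq, show (((2:Fin 6):ℕ):ℝ) = 2 from by norm_num]; ring, dir_add_pi]

lemma dirC' (l : Fin 6) : dir (lo (l+4)) = -dir (hi l) := by
  rw [dir_lo_shift, show lo l + (((4:Fin 6):ℕ):ℝ)*(π/3) = hi l + π by
    rw [hi_eq, show (((4:Fin 6):ℕ):ℝ) = 4 from by rw [show ((4:Fin 6):ℕ) = 4 from rfl]; norm_num]; ring, dir_add_pi]

lemma dirD' (l : Fin 6) : dir (hi (l+4)) = dir (lo l) - dir (hi l) := by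
  rw [dir_hi_shift, show hi l + (((4:Fin 6):ℕ):ℝ)*(π/3) = (lo l + 2*π/3) + π by
    rw [hi_eq, show (((4:Fin 6):ℕ):ℝ) = 4 from by rw [show ((4:Fin 6):ℕ) = 4 from rfl]; norm_num]; ring, dir_add_pi, dir_A, ← hi_eq, neg_sub]

lemma tri_rep {l : Fin 6} {u : E} (hu : u ∈ tri l) :
    ∃ p q : ℝ, 0 ≤ p ∧ 0 ≤ q ∧ p + q ≤ 1 ∧ u = p • dir (lo l) + q • dir (hi l) := by
  have hsub : tri l ⊆ {u : E | ∃ p q : ℝ, 0 ≤ p ∧ 0 ≤ q ∧ p + q ≤ 1 ∧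
      u = p • dir (lo l) + q • dir (hi l)} := by
    apply convexHull_min
    · rintro x (rfl | rfl | rfl)
      · exact ⟨0, 0, le_refl _, le_refl _, by norm_num, by simp⟩
      · exact ⟨1, 0, by norm_num, le_refl _, by norm_num, by simp⟩
      · exact ⟨0, 1, le_refl _, by norm_num, by norm_num, by simp⟩
    · rintro x ⟨p, q, hp, hq, hpq, rfl⟩ y ⟨p', q', hp', hq', hpq', rfl⟩ a b ha hb hab
      refine ⟨a*p + b*p', a*q + b*q', by positivity, by positivity, by nlinarith, ?_⟩
      simp only [smul_add, smul_smul, ← add_smul]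
      module
  exact hsub hu

/-- if `v` is a vertex of the `l`-tri `c + lam • ∆_l`, then the `l`-tri is
contained in `v + closure (W_k)` for some `k ∈ {l, (l+2) mod 6, (l+4) mod 6}`; moreover
if `v = c` one may take `k = l`. -/
theorem lTri_subset_closed_wedge_of_vertex
    (l : Fin 6) (c : E) (lam : ℝ) (hlam : 0 < lam) (v : E)
    (hv : v ∈ (fun x => c + lam • x) '' triVerts l) :
    (∃ k : Fin 6, (k = l ∨ k = l + 2 ∨ k = l + 4) ∧
      lTri l c lam ⊆ {x | x - v ∈ closure (wedge k)}) ∧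
    (v = c → lTri l c lam ⊆ {x | x - c ∈ closure (wedge l)}) := by
  have main : ∀ (k : Fin 6) (w : E),
      (∀ u ∈ tri l, ∃ s t : ℝ, 0 ≤ s ∧ 0 ≤ t ∧ u - w = s • dir (lo k) + t • dir (hi k)) →
      lTri l c lam ⊆ {x | x - (c + lam • w) ∈ closure (wedge k)} := by
    intro k w h x hx
    obtain ⟨u, hu, rfl⟩ := hx
    obtain ⟨s, t, hs, ht, heq⟩ := h u hu
    show c + lam • u - (c + lam • w) ∈ closure (wedge k)
    have h2 : c + lam • u - (c + lam • w) = (lam*s) • dir (lo k) + (lam*t) • dir (hi k) := by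
      rw [show c + lam • u - (c + lam • w) = lam • (u - w) by module, heq, smul_add,
        smul_smul, smul_smul]
    rw [h2]
    exact mem_closure_wedge_comb k (mul_nonneg hlam.le hs) (mul_nonneg hlam.le ht)
  have repl : ∀ u ∈ tri l, ∃ s t : ℝ, 0 ≤ s ∧ 0 ≤ t ∧
      u - (0:E) = s • dir (lo l) + t • dir (hi l) := by
    intro u hu
    obtain ⟨p, q, hp, hq, _, hrep⟩ := tri_rep hu
    exact ⟨p, q, hp, hq, by rw [sub_zero, hrep]⟩
  constructor
  · obtain ⟨w, hw, rfl⟩ := hv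
    have hw' : w = 0 ∨ w = dir (lo l) ∨ w = dir (hi l) := hw
    rcases hw' with rfl | rfl | rfl
    · exact ⟨l, Or.inl rfl, main l 0 repl⟩
    · refine ⟨l+2, Or.inr (Or.inl rfl), main (l+2) (dir (lo l)) ?_⟩
      intro u hu
      obtain ⟨p, q, hp, hq, hpq, hrep⟩ := tri_rep hu
      refine ⟨q, 1 - p - q, hq, by linarith, ?_⟩
      rw [dirA', dirB', hrep]
      module
    · refine ⟨l+4, Or.inr (Or.inr rfl), main (l+4) (dir (hi l)) ?_⟩
      intro u hu
      obtain ⟨p, q, hp, hq, hpq, hrep⟩ := tri_rep hu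
      refine ⟨1 - p - q, p, by linarith, hp, ?_⟩
      rw [dirC', dirD', hrep]
      module
  · intro _
    have := main l 0 repl
    simpa using this
end
end

section
/- Let P ⊆ ℝ² be finite, let p ∈ P, and let q ∈ P∖{p} be a nearest neighbor of p, i.e., ‖p − q‖ = min_{r ∈ P∖{p}} ‖p − r‖. Then there exist l ∈ {0,1} and an l-tri, empty with respect to P, with both p and q on its boundary. In other words, the Equilateral Delaunay graph EDG(P) is a supergraph of the nearest neighbor graph NNG(P). -/
/- Common geometric setup: the Euclidean plane, wedges `W_l`, bisectors `b_l`,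
equilateral triangles `∆_l` and `l`-tri's, circular sectors `σ_l` and `l`-pies,
and the proximity graphs (Semi-Yao, nearest-neighbor, Equilateral/Pie Delaunay,
Yao) together with Euclidean minimum spanning trees. -/

open Real EuclideanGeometry
open scoped RealInnerProductSpace

noncomputable section

-- infrastructure tests
def S3 : ℝ := Real.sqrt 3
lemma S3_sq : S3 ^ 2 = 3 := Real.sq_sqrt (by norm_num)
lemma S3_pos : 0 < S3 := Real.sqrt_pos.mpr (by norm_num)

@[simp] lemma pt_apply_zero (a b : ℝ) : pt a b 0 = a := rfl
@[simp] lemma pt_apply_one (a b : ℝ) : pt a b 1 = b := rfl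

lemma norm_E (v : E) : ‖v‖ = Real.sqrt ((v 0)^2 + (v 1)^2) := by
  rw [EuclideanSpace.norm_eq]
  simp [Fin.sum_univ_two, Real.norm_eq_abs, sq_abs]

lemma norm_sq_coord (v : E) : ‖v‖^2 = (v 0)^2 + (v 1)^2 := by
  rw [norm_E, Real.sq_sqrt (by positivity)]

lemma vec_eq_zero_iff (v : E) : v = 0 ↔ v 0 = 0 ∧ v 1 = 0 := by
  constructor
  · rintro rfl; simp
  · rintro ⟨h0, h1⟩
    ext i
    fin_cases i <;> simpa

lemma lo_zero : lo 0 = -(π/6) := by unfold lo; norm_num; ring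
lemma hi_zero : hi 0 = π/6 := by unfold hi; norm_num
lemma lo_one : lo 1 = π/6 := by unfold lo; norm_num
lemma hi_one : hi 1 = π/2 := by unfold hi; norm_num; ring

lemma dir_lo_zero : dir (lo 0) = pt (S3/2) (-(1/2)) := by
  rw [lo_zero]; unfold dir
  rw [Real.cos_neg, Real.sin_neg, Real.cos_pi_div_six, Real.sin_pi_div_six]
  rfl
lemma dir_hi_zero : dir (hi 0) = pt (S3/2) (1/2) := by
  rw [hi_zero]; unfold dir
  rw [Real.cos_pi_div_six, Real.sin_pi_div_six]; rfl
lemma dir_lo_one : dir (lo 1) = pt (S3/2) (1/2) := by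
  rw [lo_one]; unfold dir
  rw [Real.cos_pi_div_six, Real.sin_pi_div_six]; rfl
lemma dir_hi_one : dir (hi 1) = pt 0 1 := by
  rw [hi_one]; unfold dir
  rw [Real.cos_pi_div_two, Real.sin_pi_div_two]

example (c : E) (lam a b : ℝ) : (c + lam • pt a b) 0 = c 0 + lam * a := by simp
example (c : E) (lam a b : ℝ) : (c - lam • pt a b) 1 = c 1 - lam * b := by simp

lemma lTri_eq (l : Fin 6) (c : E) (lam : ℝ) :
    lTri l c lam
      = convexHull ℝ ({c, c + lam • dir (lo l), c + lam • dir (hi l)} : Set E) := by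
  have hmap : ∀ x : E, c + lam • x
      = (AffineMap.const ℝ E c + (lam • (LinearMap.id : E →ₗ[ℝ] E)).toAffineMap) x := by
    intro x; simp
  unfold lTri tri
  have : (fun x : E => c + lam • x)
      = ⇑(AffineMap.const ℝ E c + (lam • (LinearMap.id : E →ₗ[ℝ] E)).toAffineMap) := by
    funext x; exact hmap x
  rw [this, AffineMap.image_convexHull]
  congr 1
  simp [Set.image_insert_eq]

lemma edt_of_data (P : Finset E) (p q : E) (hp : p ∈ P) (hq : q ∈ P) (hne : q ≠ p)
    (hmin : ∀ r ∈ P, r ≠ p → ‖p - q‖ ≤ ‖p - r‖)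
    (l : Fin 6) (c : E) (lam : ℝ) (hlam : 0 < lam)
    (f : E →L[ℝ] ℝ) (v : E) (hfv : 0 < f v)
    (hqmem : q ∈ ({c, c + lam • dir (lo l), c + lam • dir (hi l)} : Set E))
    (hpmem : p ∈ convexHull ℝ ({c, c + lam • dir (lo l), c + lam • dir (hi l)} : Set E))
    (hd1 : ‖c - p‖ ≤ ‖p - q‖)
    (hd2 : ‖c + lam • dir (lo l) - p‖ ≤ ‖p - q‖)
    (hd3 : ‖c + lam • dir (hi l) - p‖ ≤ ‖p - q‖)
    (hf1 : f c ≤ f p) (hf2 : f (c + lam • dir (lo l)) ≤ f p)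
    (hf3 : f (c + lam • dir (hi l)) ≤ f p) :
    EDT P l p q := by
  have hd0 : 0 < ‖p - q‖ := norm_pos_iff.mpr (sub_ne_zero.mpr (Ne.symm hne))
  set T := lTri l c lam with hT
  have hTeq : T = convexHull ℝ ({c, c + lam • dir (lo l), c + lam • dir (hi l)} : Set E) :=
    lTri_eq l c lam
  have hsub : T ⊆ Metric.closedBall p ‖p - q‖ := by
    rw [hTeq]
    apply convexHull_min _ (convex_closedBall p _)
    rintro x (rfl | rfl | rfl) <;>
      simpa [Metric.mem_closedBall, dist_eq_norm] using ‹_›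
  have hfT : ∀ x ∈ T, f x ≤ f p := by
    rw [hTeq]
    intro x hx
    refine convexHull_min ?_ (convex_halfSpace_le ⟨f.map_add, f.map_smul⟩ (f p)) hx
    rintro y (rfl | rfl | rfl) <;> assumption
  have hpT : p ∈ T := hTeq ▸ hpmem
  have hqT : q ∈ T := hTeq ▸ subset_convexHull ℝ _ hqmem
  have hint : interior T ⊆ Metric.ball p ‖p - q‖ := by
    rw [← interior_closedBall p hd0.ne']
    exact interior_mono hsub
  have hpni : p ∉ interior T := by
    intro h
    rw [mem_interior_iff_mem_nhds, Metric.mem_nhds_iff] at h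
    obtain ⟨ε, hε, hb⟩ := h
    have hvne : v ≠ 0 := by rintro rfl; simp at hfv
    have hvn : 0 < ‖v‖ := norm_pos_iff.mpr hvne
    set x := p + (ε / (2 * ‖v‖)) • v with hx
    have hxb : x ∈ Metric.ball p ε := by
      rw [Metric.mem_ball, dist_eq_norm]
      have : x - p = (ε / (2 * ‖v‖)) • v := by rw [hx]; abel
      rw [this, norm_smul, Real.norm_eq_abs,
        abs_of_pos (by positivity : (0:ℝ) < ε / (2 * ‖v‖))]
      have h12 : ‖v‖ * (ε / (2 * ‖v‖)) = ε / 2 := by field_simp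
      rw [mul_comm, h12]; linarith
    have hle := hfT x (hb hxb)
    rw [hx, map_add, map_smul] at hle
    have : 0 < (ε / (2 * ‖v‖)) • f v := by
      simp only [smul_eq_mul]; positivity
    linarith [this]
  have hqni : q ∉ interior T := by
    intro h
    have := hint h
    rw [Metric.mem_ball, dist_eq_norm, ← norm_sub_rev] at this
    exact lt_irrefl _ this
  refine ⟨hp, hq, Ne.symm hne, c, lam, hlam, ?_, ?_, ?_⟩
  · exact ⟨subset_closure hpT, hpni⟩
  · exact ⟨subset_closure hqT, hqni⟩
  · intro r hr hri
    rcases eq_or_ne r p with rfl | hrp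
    · exact hpni hri
    · have h1 := hmin r hr hrp
      have h2 := hint hri
      rw [Metric.mem_ball, dist_eq_norm, ← norm_sub_rev] at h2
      linarith


lemma vec_eq_iff (x y : E) : x = y ↔ x 0 = y 0 ∧ x 1 = y 1 := by
  constructor
  · rintro rfl; exact ⟨rfl, rfl⟩
  · rintro ⟨h0, h1⟩
    rw [← sub_eq_zero, vec_eq_zero_iff]
    constructor <;> simp [h0, h1]

lemma norm_sub_le_norm_sub (x p q' : E)
    (h : (x 0 - p 0)^2 + (x 1 - p 1)^2 ≤ (p 0 - q' 0)^2 + (p 1 - q' 1)^2) :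
    ‖x - p‖ ≤ ‖p - q'‖ := by
  rw [norm_E, norm_E]
  apply Real.sqrt_le_sqrt
  simpa using h

lemma fEval (a b : ℝ) (x : E) :
    (a • EuclideanSpace.proj (0 : Fin 2) + b • EuclideanSpace.proj (1 : Fin 2) : E →L[ℝ] ℝ) x
      = a * x 0 + b * x 1 := by
  simp

set_option maxHeartbeats 1600000 in
lemma caseK1 (P : Finset E) (p q : E) (hp : p ∈ P) (hq : q ∈ P) (hne : q ≠ p)
    (hmin : ∀ r ∈ P, r ≠ p → ‖p - q‖ ≤ ‖p - r‖)
    (h1 : S3 * (p 1 - q 1) ≤ p 0 - q 0) (h2 : -(S3 * (p 1 - q 1)) ≤ p 0 - q 0) :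
    EDT P 0 p q := by
  have hs := S3_sq
  have hs0 := S3_pos
  have hwne : ¬ (p 0 - q 0 = 0 ∧ p 1 - q 1 = 0) := by
    rintro ⟨a, b⟩
    apply hne
    have h : p - q = 0 := (vec_eq_zero_iff _).mpr ⟨by simpa using a, by simpa using b⟩
    exact (sub_eq_zero.mp h).symm
  have hw0nn : 0 ≤ p 0 - q 0 := by nlinarith
  have hw0 : 0 < p 0 - q 0 := by
    rcases eq_or_lt_of_le hw0nn with h | h
    · exact absurd ⟨h.symm, by nlinarith⟩ hwne
    · exact h
  set lam : ℝ := 2 * S3 * (p 0 - q 0) / 3 with hlam_def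
  clear_value lam
  have hlam : 0 < lam := by
    have := mul_pos hs0 hw0
    rw [hlam_def]; nlinarith
  have e1 : q 0 + lam * (S3 / 2) = p 0 := by
    rw [hlam_def]; linear_combination (p 0 - q 0) / 3 * hs
  have e2 : lam / 2 = S3 * (p 0 - q 0) / 3 := by rw [hlam_def]; ring
  have f1 : lam ^ 2 = 4 * (p 0 - q 0)^2 / 3 := by
    rw [hlam_def]; linear_combination (4 * (p 0 - q 0)^2 / 9) * hs
  have f2 : lam * (p 1 - q 1) ≤ 2 * (p 0 - q 0)^2 / 3 := by
    rw [hlam_def]; nlinarith [mul_le_mul_of_nonneg_left h1 hw0nn]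
  have f3 : lam * (-(p 1 - q 1)) ≤ 2 * (p 0 - q 0)^2 / 3 := by
    rw [hlam_def]; nlinarith [mul_le_mul_of_nonneg_left h2 hw0nn]
  have hub : p 1 - q 1 ≤ lam / 2 := by
    rw [e2]; nlinarith [mul_le_mul_of_nonneg_left h1 hs0.le]
  have hlb : -(lam / 2) ≤ p 1 - q 1 := by
    rw [e2]; nlinarith [mul_le_mul_of_nonneg_left h2 hs0.le]
  refine edt_of_data P p q hp hq hne hmin 0 q lam hlam
      ((1:ℝ) • EuclideanSpace.proj (0 : Fin 2) + (0:ℝ) • EuclideanSpace.proj (1 : Fin 2))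
      (pt 1 0) ?_ ?_ ?_ ?_ ?_ ?_ ?_ ?_ ?_
  · rw [fEval]; norm_num
  · exact Set.mem_insert _ _
  · rw [dir_lo_zero, dir_hi_zero]
    apply segment_subset_convexHull
      (show q + lam • pt (S3/2) (-(1/2)) ∈
        ({q, q + lam • pt (S3/2) (-(1/2)), q + lam • pt (S3/2) (1/2)} : Set E) by simp)
      (show q + lam • pt (S3/2) (1/2) ∈
        ({q, q + lam • pt (S3/2) (-(1/2)), q + lam • pt (S3/2) (1/2)} : Set E) by simp)
    refine ⟨1/2 - (p 1 - q 1)/lam, 1/2 + (p 1 - q 1)/lam, ?_, ?_, by ring, ?_⟩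
    · have : (p 1 - q 1)/lam ≤ 1/2 := by rw [div_le_iff₀ hlam]; linarith
      linarith
    · have : -(1/2) ≤ (p 1 - q 1)/lam := by rw [le_div_iff₀ hlam]; linarith
      linarith
    · refine (vec_eq_iff _ _).mpr ⟨?_, ?_⟩
      · simp only [PiLp.add_apply, PiLp.smul_apply, pt_apply_zero, smul_eq_mul]
        linear_combination e1
      · simp only [PiLp.add_apply, PiLp.smul_apply, pt_apply_one, smul_eq_mul]
        field_simp
        ring
  · exact le_of_eq (norm_sub_rev q p)
  · rw [dir_lo_zero]
    apply norm_sub_le_norm_sub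
    have c0 : (q + lam • pt (S3/2) (-(1/2))) 0 - p 0 = 0 := by
      simp only [PiLp.add_apply, PiLp.smul_apply, pt_apply_zero, smul_eq_mul]; linarith [e1]
    have c1 : (q + lam • pt (S3/2) (-(1/2))) 1 - p 1 = -(lam/2) - (p 1 - q 1) := by
      simp only [PiLp.add_apply, PiLp.smul_apply, pt_apply_one, smul_eq_mul]; ring
    rw [c0, c1]
    nlinarith [f1, f2]
  · rw [dir_hi_zero]
    apply norm_sub_le_norm_sub
    have c0 : (q + lam • pt (S3/2) (1/2)) 0 - p 0 = 0 := by
      simp only [PiLp.add_apply, PiLp.smul_apply, pt_apply_zero, smul_eq_mul]; linarith [e1]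
    have c1 : (q + lam • pt (S3/2) (1/2)) 1 - p 1 = lam/2 - (p 1 - q 1) := by
      simp only [PiLp.add_apply, PiLp.smul_apply, pt_apply_one, smul_eq_mul]; ring
    rw [c0, c1]
    nlinarith [f1, f3]
  · rw [fEval, fEval]; nlinarith
  · rw [dir_lo_zero, fEval, fEval]
    have c0 : (q + lam • pt (S3/2) (-(1/2))) 0 = p 0 := by
      simp only [PiLp.add_apply, PiLp.smul_apply, pt_apply_zero, smul_eq_mul]; linarith [e1]
    rw [c0]; ring_nf; exact le_refl _
  · rw [dir_hi_zero, fEval, fEval]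
    have c0 : (q + lam • pt (S3/2) (1/2)) 0 = p 0 := by
      simp only [PiLp.add_apply, PiLp.smul_apply, pt_apply_zero, smul_eq_mul]; linarith [e1]
    rw [c0]; ring_nf; exact le_refl _

set_option maxHeartbeats 1600000 in
lemma caseK4 (P : Finset E) (p q : E) (hp : p ∈ P) (hq : q ∈ P) (hne : q ≠ p)
    (hmin : ∀ r ∈ P, r ≠ p → ‖p - q‖ ≤ ‖p - r‖)
    (h1 : p 0 - q 0 ≤ S3 * (p 1 - q 1)) (h2 : p 0 - q 0 ≤ -(S3 * (p 1 - q 1))) :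
    EDT P 1 p q := by
  have hs := S3_sq
  have hs0 := S3_pos
  have hwne : ¬ (p 0 - q 0 = 0 ∧ p 1 - q 1 = 0) := by
    rintro ⟨a, b⟩
    apply hne
    have h : p - q = 0 := (vec_eq_zero_iff _).mpr ⟨by simpa using a, by simpa using b⟩
    exact (sub_eq_zero.mp h).symm
  have hw0np : p 0 - q 0 ≤ 0 := by nlinarith
  have hw0 : p 0 - q 0 < 0 := by
    rcases eq_or_lt_of_le hw0np with h | h
    · exact absurd ⟨h, by nlinarith⟩ hwne
    · exact h
  have hw0nn' : 0 ≤ q 0 - p 0 := by linarith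
  set lam : ℝ := 2 * S3 * (q 0 - p 0) / 3 with hlam_def
  clear_value lam
  have hlam : 0 < lam := by
    have : 0 < q 0 - p 0 := by linarith
    have := mul_pos hs0 this
    rw [hlam_def]; nlinarith
  have e1 : q 0 - lam * (S3 / 2) = p 0 := by
    rw [hlam_def]; linear_combination ((p 0 - q 0) / 3) * hs
  have e2 : lam / 2 = S3 * (q 0 - p 0) / 3 := by rw [hlam_def]; ring
  have f1 : lam ^ 2 = 4 * (p 0 - q 0)^2 / 3 := by
    rw [hlam_def]; linear_combination (4 * (p 0 - q 0)^2 / 9) * hs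
  have f2 : lam * (p 1 - q 1) ≤ 2 * (p 0 - q 0)^2 / 3 := by
    have hh : S3 * (p 1 - q 1) ≤ -(p 0 - q 0) := by linarith
    rw [hlam_def]; nlinarith [mul_le_mul_of_nonneg_left hh hw0nn']
  have f3 : lam * (-(p 1 - q 1)) ≤ 2 * (p 0 - q 0)^2 / 3 := by
    have hh : -(S3 * (p 1 - q 1)) ≤ -(p 0 - q 0) := by linarith
    rw [hlam_def]; nlinarith [mul_le_mul_of_nonneg_left hh hw0nn']
  have hub : p 1 - q 1 ≤ lam / 2 := by
    have hh : S3 * (S3 * (p 1 - q 1)) ≤ S3 * (-(p 0 - q 0)) :=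
      mul_le_mul_of_nonneg_left (by linarith) hs0.le
    rw [e2]; nlinarith [hh]
  have hlb : -(lam / 2) ≤ p 1 - q 1 := by
    have hh : S3 * (-(S3 * (p 1 - q 1))) ≤ S3 * (-(p 0 - q 0)) :=
      mul_le_mul_of_nonneg_left (by linarith) hs0.le
    rw [e2]; nlinarith [hh]
  refine edt_of_data P p q hp hq hne hmin 1 (q - lam • pt (S3/2) (1/2)) lam hlam
      ((-1:ℝ) • EuclideanSpace.proj (0 : Fin 2) + (0:ℝ) • EuclideanSpace.proj (1 : Fin 2))
      (pt (-1) 0) ?_ ?_ ?_ ?_ ?_ ?_ ?_ ?_ ?_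
  · rw [fEval]; norm_num
  · rw [dir_lo_one]
    simp only [Set.mem_insert_iff, Set.mem_singleton_iff]
    right; left; abel
  · rw [dir_lo_one, dir_hi_one]
    apply segment_subset_convexHull
      (show q - lam • pt (S3/2) (1/2) ∈
        ({q - lam • pt (S3/2) (1/2), q - lam • pt (S3/2) (1/2) + lam • pt (S3/2) (1/2),
          q - lam • pt (S3/2) (1/2) + lam • pt 0 1} : Set E) from Set.mem_insert _ _)
      (show q - lam • pt (S3/2) (1/2) + lam • pt 0 1 ∈
        ({q - lam • pt (S3/2) (1/2), q - lam • pt (S3/2) (1/2) + lam • pt (S3/2) (1/2),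
          q - lam • pt (S3/2) (1/2) + lam • pt 0 1} : Set E) by simp)
    refine ⟨1/2 - (p 1 - q 1)/lam, 1/2 + (p 1 - q 1)/lam, ?_, ?_, by ring, ?_⟩
    · have : (p 1 - q 1)/lam ≤ 1/2 := by rw [div_le_iff₀ hlam]; linarith
      linarith
    · have : -(1/2) ≤ (p 1 - q 1)/lam := by rw [le_div_iff₀ hlam]; linarith
      linarith
    · refine (vec_eq_iff _ _).mpr ⟨?_, ?_⟩
      · simp only [PiLp.add_apply, PiLp.sub_apply, PiLp.smul_apply, pt_apply_zero, smul_eq_mul]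
        linear_combination e1
      · simp only [PiLp.add_apply, PiLp.sub_apply, PiLp.smul_apply, pt_apply_one, smul_eq_mul]
        field_simp
        ring
  · apply norm_sub_le_norm_sub
    have c0 : (q - lam • pt (S3/2) (1/2)) 0 - p 0 = 0 := by
      simp only [PiLp.sub_apply, PiLp.smul_apply, pt_apply_zero, smul_eq_mul]; linarith [e1]
    have c1 : (q - lam • pt (S3/2) (1/2)) 1 - p 1 = -(lam/2) - (p 1 - q 1) := by
      simp only [PiLp.sub_apply, PiLp.smul_apply, pt_apply_one, smul_eq_mul]; ring
    rw [c0, c1]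
    nlinarith [f1, f2]
  · rw [dir_lo_one]
    have hqq : q - lam • pt (S3/2) (1/2) + lam • pt (S3/2) (1/2) = q := by abel
    rw [hqq]
    exact le_of_eq (norm_sub_rev q p)
  · rw [dir_hi_one]
    apply norm_sub_le_norm_sub
    have c0 : (q - lam • pt (S3/2) (1/2) + lam • pt 0 1) 0 - p 0 = 0 := by
      simp only [PiLp.add_apply, PiLp.sub_apply, PiLp.smul_apply, pt_apply_zero, smul_eq_mul]
      linarith [e1]
    have c1 : (q - lam • pt (S3/2) (1/2) + lam • pt 0 1) 1 - p 1 = lam/2 - (p 1 - q 1) := by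
      simp only [PiLp.add_apply, PiLp.sub_apply, PiLp.smul_apply, pt_apply_one, smul_eq_mul]
      ring
    rw [c0, c1]
    nlinarith [f1, f3]
  · rw [fEval, fEval]
    have c0 : (q - lam • pt (S3/2) (1/2)) 0 = p 0 := by
      simp only [PiLp.sub_apply, PiLp.smul_apply, pt_apply_zero, smul_eq_mul]; linarith [e1]
    rw [c0]; ring_nf; exact le_refl _
  · rw [dir_lo_one]
    have hqq : q - lam • pt (S3/2) (1/2) + lam • pt (S3/2) (1/2) = q := by abel
    rw [hqq, fEval, fEval]
    nlinarith
  · rw [dir_hi_one, fEval, fEval]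
    have c0 : (q - lam • pt (S3/2) (1/2) + lam • pt 0 1) 0 = p 0 := by
      simp only [PiLp.add_apply, PiLp.sub_apply, PiLp.smul_apply, pt_apply_zero, smul_eq_mul]
      linarith [e1]
    rw [c0]; ring_nf; exact le_refl _

set_option maxHeartbeats 1600000 in
lemma caseK2 (P : Finset E) (p q : E) (hp : p ∈ P) (hq : q ∈ P) (hne : q ≠ p)
    (hmin : ∀ r ∈ P, r ≠ p → ‖p - q‖ ≤ ‖p - r‖)
    (h1 : p 0 - q 0 ≤ S3 * (p 1 - q 1)) (h2 : 0 ≤ p 0 - q 0) :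
    EDT P 1 p q := by
  have hs := S3_sq
  have hs0 := S3_pos
  have hwne : ¬ (p 0 - q 0 = 0 ∧ p 1 - q 1 = 0) := by
    rintro ⟨a, b⟩
    apply hne
    have h : p - q = 0 := (vec_eq_zero_iff _).mpr ⟨by simpa using a, by simpa using b⟩
    exact (sub_eq_zero.mp h).symm
  have hw1nn : 0 ≤ p 1 - q 1 := by
    by_contra hc
    push_neg at hc
    nlinarith [mul_pos hs0 (neg_pos.mpr hc)]
  set lam : ℝ := S3 * (p 0 - q 0) / 3 + (p 1 - q 1) with hlam_def
  clear_value lam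
  have hlamnn : 0 ≤ lam := by
    rw [hlam_def]; nlinarith [mul_nonneg hs0.le h2]
  have hlam : 0 < lam := by
    rcases eq_or_lt_of_le hlamnn with h | h
    · exfalso
      apply hwne
      rw [hlam_def] at h
      have hS30 : S3 * (p 0 - q 0) = 0 := by
        nlinarith [mul_nonneg hs0.le h2]
      have hw1 : p 1 - q 1 = 0 := by
        nlinarith [mul_nonneg hs0.le h2]
      exact ⟨(mul_eq_zero.mp hS30).resolve_left hs0.ne', hw1⟩
    · exact h
  have hSlam : 0 < S3 * lam := mul_pos hs0 hlam
  have e1 : S3 * lam = (p 0 - q 0) + S3 * (p 1 - q 1) := by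
    rw [hlam_def]; linear_combination ((p 0 - q 0) / 3) * hs
  have hA : S3^2 * (p 1 - q 1)^2 = 3 * (p 1 - q 1)^2 := by linear_combination (p 1 - q 1)^2 * hs
  have hB : S3^2 * (p 0 - q 0)^2 = 3 * (p 0 - q 0)^2 := by linear_combination (p 0 - q 0)^2 * hs
  have hB2 : S3^2 * (p 0 - q 0) = 3 * (p 0 - q 0) := by linear_combination (p 0 - q 0) * hs
  have hsum : 0 ≤ (p 0 - q 0) + S3 * (p 1 - q 1) := by nlinarith [mul_nonneg hs0.le hw1nn]
  refine edt_of_data P p q hp hq hne hmin 1 q lam hlam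
      ((1:ℝ) • EuclideanSpace.proj (0 : Fin 2) + S3 • EuclideanSpace.proj (1 : Fin 2))
      (pt 1 S3) ?_ ?_ ?_ ?_ ?_ ?_ ?_ ?_ ?_
  · rw [fEval]; simp only [pt_apply_zero, pt_apply_one]; positivity
  · exact Set.mem_insert _ _
  · rw [dir_lo_one, dir_hi_one]
    apply segment_subset_convexHull
      (show q + lam • pt (S3/2) (1/2) ∈
        ({q, q + lam • pt (S3/2) (1/2), q + lam • pt 0 1} : Set E) by simp)
      (show q + lam • pt 0 1 ∈
        ({q, q + lam • pt (S3/2) (1/2), q + lam • pt 0 1} : Set E) by simp)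
    refine ⟨2*(p 0 - q 0)/(S3*lam), 1 - 2*(p 0 - q 0)/(S3*lam), ?_, ?_, by ring, ?_⟩
    · exact div_nonneg (by linarith) hSlam.le
    · rw [sub_nonneg, div_le_one hSlam]; linarith [e1]
    · refine (vec_eq_iff _ _).mpr ⟨?_, ?_⟩
      · simp only [PiLp.add_apply, PiLp.smul_apply, pt_apply_zero, smul_eq_mul]
        field_simp
        ring
      · simp only [PiLp.add_apply, PiLp.smul_apply, pt_apply_one, smul_eq_mul]
        field_simp
        linear_combination lam * e1
  · exact le_of_eq (norm_sub_rev q p)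
  · rw [dir_lo_one]
    apply norm_sub_le_norm_sub
    have c0 : (q + lam • pt (S3/2) (1/2)) 0 - p 0 = (S3*(p 1 - q 1) - (p 0 - q 0))/2 := by
      simp only [PiLp.add_apply, PiLp.smul_apply, pt_apply_zero, smul_eq_mul]
      rw [hlam_def]; linear_combination ((p 0 - q 0)/6) * hs
    have c1 : (q + lam • pt (S3/2) (1/2)) 1 - p 1 = (S3*(p 0 - q 0) - 3*(p 1 - q 1))/6 := by
      simp only [PiLp.add_apply, PiLp.smul_apply, pt_apply_one, smul_eq_mul]
      rw [hlam_def]; ring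
    rw [c0, c1]
    nlinarith [hA, hB, mul_nonneg h2 hsum]
  · rw [dir_hi_one]
    apply norm_sub_le_norm_sub
    have c0 : (q + lam • pt 0 1) 0 - p 0 = -(p 0 - q 0) := by
      simp only [PiLp.add_apply, PiLp.smul_apply, pt_apply_zero, smul_eq_mul]; ring
    have c1 : (q + lam • pt 0 1) 1 - p 1 = S3*(p 0 - q 0)/3 := by
      simp only [PiLp.add_apply, PiLp.smul_apply, pt_apply_one, smul_eq_mul]
      rw [hlam_def]; ring
    rw [c0, c1]
    nlinarith [hA, hB, mul_self_le_mul_self h2 h1]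
  · rw [fEval, fEval]
    nlinarith [mul_nonneg hs0.le hw1nn]
  · rw [dir_lo_one, fEval, fEval]
    have c0 : (q + lam • pt (S3/2) (1/2)) 0 - p 0 = (S3*(p 1 - q 1) - (p 0 - q 0))/2 := by
      simp only [PiLp.add_apply, PiLp.smul_apply, pt_apply_zero, smul_eq_mul]
      rw [hlam_def]; linear_combination ((p 0 - q 0)/6) * hs
    have c1 : (q + lam • pt (S3/2) (1/2)) 1 - p 1 = (S3*(p 0 - q 0) - 3*(p 1 - q 1))/6 := by
      simp only [PiLp.add_apply, PiLp.smul_apply, pt_apply_one, smul_eq_mul]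
      rw [hlam_def]; ring
    have c1' : S3 * ((q + lam • pt (S3/2) (1/2)) 1)
        = S3 * p 1 + (S3^2*(p 0 - q 0) - 3*S3*(p 1 - q 1))/6 := by
      linear_combination S3 * c1
    linarith [c0, c1', hB2]
  · rw [dir_hi_one, fEval, fEval]
    have c0 : (q + lam • pt 0 1) 0 - p 0 = -(p 0 - q 0) := by
      simp only [PiLp.add_apply, PiLp.smul_apply, pt_apply_zero, smul_eq_mul]; ring
    have c1 : (q + lam • pt 0 1) 1 - p 1 = S3*(p 0 - q 0)/3 := by
      simp only [PiLp.add_apply, PiLp.smul_apply, pt_apply_one, smul_eq_mul]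
      rw [hlam_def]; ring
    have c1' : S3 * ((q + lam • pt 0 1) 1) = S3 * p 1 + S3^2*(p 0 - q 0)/3 := by
      linear_combination S3 * c1
    linarith [c0, c1', hB2]

set_option maxHeartbeats 1600000 in
lemma caseK3 (P : Finset E) (p q : E) (hp : p ∈ P) (hq : q ∈ P) (hne : q ≠ p)
    (hmin : ∀ r ∈ P, r ≠ p → ‖p - q‖ ≤ ‖p - r‖)
    (h1 : -(S3 * (p 1 - q 1)) ≤ p 0 - q 0) (h2 : p 0 - q 0 ≤ 0) :
    EDT P 0 p q := by
  have hs := S3_sq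
  have hs0 := S3_pos
  have hwne : ¬ (p 0 - q 0 = 0 ∧ p 1 - q 1 = 0) := by
    rintro ⟨a, b⟩
    apply hne
    have h : p - q = 0 := (vec_eq_zero_iff _).mpr ⟨by simpa using a, by simpa using b⟩
    exact (sub_eq_zero.mp h).symm
  have hw1nn : 0 ≤ p 1 - q 1 := by
    by_contra hc
    push_neg at hc
    nlinarith [mul_pos hs0 (neg_pos.mpr hc)]
  set lam : ℝ := (p 1 - q 1) - S3 * (p 0 - q 0) / 3 with hlam_def
  clear_value lam
  have hlamnn : 0 ≤ lam := by
    rw [hlam_def]; nlinarith [mul_nonneg hs0.le (neg_nonneg.mpr h2)]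
  have hlam : 0 < lam := by
    rcases eq_or_lt_of_le hlamnn with h | h
    · exfalso
      apply hwne
      rw [hlam_def] at h
      have hS30 : S3 * (p 0 - q 0) = 0 := by
        nlinarith [mul_nonneg hs0.le (neg_nonneg.mpr h2)]
      have hw1 : p 1 - q 1 = 0 := by
        nlinarith [mul_nonneg hs0.le (neg_nonneg.mpr h2)]
      exact ⟨(mul_eq_zero.mp hS30).resolve_left hs0.ne', hw1⟩
    · exact h
  have hSlam : 0 < S3 * lam := mul_pos hs0 hlam
  have e1 : S3 * lam = S3 * (p 1 - q 1) - (p 0 - q 0) := by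
    rw [hlam_def]; linear_combination (-(p 0 - q 0) / 3) * hs
  have hA : S3^2 * (p 1 - q 1)^2 = 3 * (p 1 - q 1)^2 := by linear_combination (p 1 - q 1)^2 * hs
  have hB : S3^2 * (p 0 - q 0)^2 = 3 * (p 0 - q 0)^2 := by linear_combination (p 0 - q 0)^2 * hs
  have hB2 : S3^2 * (p 0 - q 0) = 3 * (p 0 - q 0) := by linear_combination (p 0 - q 0) * hs
  refine edt_of_data P p q hp hq hne hmin 0 (q - lam • pt (S3/2) (-(1/2))) lam hlam
      ((-1:ℝ) • EuclideanSpace.proj (0 : Fin 2) + S3 • EuclideanSpace.proj (1 : Fin 2))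
      (pt (-1) S3) ?_ ?_ ?_ ?_ ?_ ?_ ?_ ?_ ?_
  · rw [fEval]; simp only [pt_apply_zero, pt_apply_one]
    have : (-1:ℝ) * (-1) + S3 * S3 = 1 + S3 * S3 := by ring
    rw [this]; positivity
  · rw [dir_lo_zero]
    simp only [Set.mem_insert_iff, Set.mem_singleton_iff]
    right; left; abel
  · rw [dir_lo_zero, dir_hi_zero]
    apply segment_subset_convexHull
      (show q - lam • pt (S3/2) (-(1/2)) ∈
        ({q - lam • pt (S3/2) (-(1/2)), q - lam • pt (S3/2) (-(1/2)) + lam • pt (S3/2) (-(1/2)),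
          q - lam • pt (S3/2) (-(1/2)) + lam • pt (S3/2) (1/2)} : Set E) from Set.mem_insert _ _)
      (show q - lam • pt (S3/2) (-(1/2)) + lam • pt (S3/2) (1/2) ∈
        ({q - lam • pt (S3/2) (-(1/2)), q - lam • pt (S3/2) (-(1/2)) + lam • pt (S3/2) (-(1/2)),
          q - lam • pt (S3/2) (-(1/2)) + lam • pt (S3/2) (1/2)} : Set E) by simp)
    refine ⟨-2*(p 0 - q 0)/(S3*lam), 1 - -2*(p 0 - q 0)/(S3*lam), ?_, ?_, by ring, ?_⟩
    · exact div_nonneg (by linarith) hSlam.le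
    · rw [sub_nonneg, div_le_one hSlam]; linarith [e1]
    · refine (vec_eq_iff _ _).mpr ⟨?_, ?_⟩
      · simp only [PiLp.add_apply, PiLp.sub_apply, PiLp.smul_apply, pt_apply_zero, smul_eq_mul]
        field_simp
        ring
      · simp only [PiLp.add_apply, PiLp.sub_apply, PiLp.smul_apply, pt_apply_one, smul_eq_mul]
        field_simp
        linear_combination (2*lam) * e1
  · apply norm_sub_le_norm_sub
    have c0 : (q - lam • pt (S3/2) (-(1/2))) 0 - p 0 = -((p 0 - q 0) + S3*(p 1 - q 1))/2 := by
      simp only [PiLp.sub_apply, PiLp.smul_apply, pt_apply_zero, smul_eq_mul]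
      rw [hlam_def]; linear_combination ((p 0 - q 0)/6) * hs
    have c1 : (q - lam • pt (S3/2) (-(1/2))) 1 - p 1 = -(S3*(p 0 - q 0) + 3*(p 1 - q 1))/6 := by
      simp only [PiLp.sub_apply, PiLp.smul_apply, pt_apply_one, smul_eq_mul]
      rw [hlam_def]; ring
    rw [c0, c1]
    nlinarith [hA, hB, mul_nonneg (mul_nonneg hs0.le (neg_nonneg.mpr h2)) hw1nn]
  · rw [dir_lo_zero]
    have hqq : q - lam • pt (S3/2) (-(1/2)) + lam • pt (S3/2) (-(1/2)) = q := by abel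
    rw [hqq]
    exact le_of_eq (norm_sub_rev q p)
  · rw [dir_hi_zero]
    apply norm_sub_le_norm_sub
    have c0 : (q - lam • pt (S3/2) (-(1/2)) + lam • pt (S3/2) (1/2)) 0 - p 0 = -(p 0 - q 0) := by
      simp only [PiLp.add_apply, PiLp.sub_apply, PiLp.smul_apply, pt_apply_zero, smul_eq_mul]
      ring
    have c1 : (q - lam • pt (S3/2) (-(1/2)) + lam • pt (S3/2) (1/2)) 1 - p 1
        = -(S3*(p 0 - q 0))/3 := by
      simp only [PiLp.add_apply, PiLp.sub_apply, PiLp.smul_apply, pt_apply_one, smul_eq_mul]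
      rw [hlam_def]; ring
    rw [c0, c1]
    nlinarith [hA, hB, mul_self_le_mul_self (neg_nonneg.mpr h2) (by linarith : -(p 0 - q 0) ≤ S3*(p 1 - q 1))]
  · rw [fEval, fEval]
    have c0 : (q - lam • pt (S3/2) (-(1/2))) 0 - p 0 = -((p 0 - q 0) + S3*(p 1 - q 1))/2 := by
      simp only [PiLp.sub_apply, PiLp.smul_apply, pt_apply_zero, smul_eq_mul]
      rw [hlam_def]; linear_combination ((p 0 - q 0)/6) * hs
    have c1 : (q - lam • pt (S3/2) (-(1/2))) 1 - p 1 = -(S3*(p 0 - q 0) + 3*(p 1 - q 1))/6 := by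
      simp only [PiLp.sub_apply, PiLp.smul_apply, pt_apply_one, smul_eq_mul]
      rw [hlam_def]; ring
    have c1' : S3 * ((q - lam • pt (S3/2) (-(1/2))) 1)
        = S3 * p 1 + (-(S3^2*(p 0 - q 0) + 3*S3*(p 1 - q 1))/6) := by
      linear_combination S3 * c1
    linarith [c0, c1', hB2]
  · rw [dir_lo_zero]
    have hqq : q - lam • pt (S3/2) (-(1/2)) + lam • pt (S3/2) (-(1/2)) = q := by abel
    rw [hqq, fEval, fEval]
    nlinarith [mul_nonneg hs0.le hw1nn]
  · rw [dir_hi_zero, fEval, fEval]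
    have c0 : (q - lam • pt (S3/2) (-(1/2)) + lam • pt (S3/2) (1/2)) 0 - p 0 = -(p 0 - q 0) := by
      simp only [PiLp.add_apply, PiLp.sub_apply, PiLp.smul_apply, pt_apply_zero, smul_eq_mul]
      ring
    have c1 : (q - lam • pt (S3/2) (-(1/2)) + lam • pt (S3/2) (1/2)) 1 - p 1
        = -(S3*(p 0 - q 0))/3 := by
      simp only [PiLp.add_apply, PiLp.sub_apply, PiLp.smul_apply, pt_apply_one, smul_eq_mul]
      rw [hlam_def]; ring
    have c1' : S3 * ((q - lam • pt (S3/2) (-(1/2)) + lam • pt (S3/2) (1/2)) 1)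
        = S3 * p 1 + (-(S3^2*(p 0 - q 0))/3) := by
      linear_combination S3 * c1
    linarith [c0, c1', hB2]

set_option maxHeartbeats 1600000 in
lemma caseK5 (P : Finset E) (p q : E) (hp : p ∈ P) (hq : q ∈ P) (hne : q ≠ p)
    (hmin : ∀ r ∈ P, r ≠ p → ‖p - q‖ ≤ ‖p - r‖)
    (h1 : S3 * (p 1 - q 1) ≤ p 0 - q 0) (h2 : p 0 - q 0 ≤ 0) :
    EDT P 0 p q := by
  have hs := S3_sq
  have hs0 := S3_pos
  have hwne : ¬ (p 0 - q 0 = 0 ∧ p 1 - q 1 = 0) := by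
    rintro ⟨a, b⟩
    apply hne
    have h : p - q = 0 := (vec_eq_zero_iff _).mpr ⟨by simpa using a, by simpa using b⟩
    exact (sub_eq_zero.mp h).symm
  have hw1np : p 1 - q 1 ≤ 0 := by
    by_contra hc
    push_neg at hc
    nlinarith [mul_pos hs0 hc]
  set lam : ℝ := -(p 1 - q 1) - S3 * (p 0 - q 0) / 3 with hlam_def
  clear_value lam
  have hlamnn : 0 ≤ lam := by
    rw [hlam_def]; nlinarith [mul_nonneg hs0.le (neg_nonneg.mpr h2)]
  have hlam : 0 < lam := by
    rcases eq_or_lt_of_le hlamnn with h | h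
    · exfalso
      apply hwne
      rw [hlam_def] at h
      have hS30 : S3 * (p 0 - q 0) = 0 := by
        nlinarith [mul_nonneg hs0.le (neg_nonneg.mpr h2)]
      have hw1 : p 1 - q 1 = 0 := by
        nlinarith [mul_nonneg hs0.le (neg_nonneg.mpr h2)]
      exact ⟨(mul_eq_zero.mp hS30).resolve_left hs0.ne', hw1⟩
    · exact h
  have hSlam : 0 < S3 * lam := mul_pos hs0 hlam
  have e1 : S3 * lam = -(S3 * (p 1 - q 1)) - (p 0 - q 0) := by
    rw [hlam_def]; linear_combination (-(p 0 - q 0) / 3) * hs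
  have hA : S3^2 * (p 1 - q 1)^2 = 3 * (p 1 - q 1)^2 := by linear_combination (p 1 - q 1)^2 * hs
  have hB : S3^2 * (p 0 - q 0)^2 = 3 * (p 0 - q 0)^2 := by linear_combination (p 0 - q 0)^2 * hs
  have hB2 : S3^2 * (p 0 - q 0) = 3 * (p 0 - q 0) := by linear_combination (p 0 - q 0) * hs
  refine edt_of_data P p q hp hq hne hmin 0 (q - lam • pt (S3/2) (1/2)) lam hlam
      ((-1:ℝ) • EuclideanSpace.proj (0 : Fin 2) + (-S3) • EuclideanSpace.proj (1 : Fin 2))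
      (pt (-1) (-S3)) ?_ ?_ ?_ ?_ ?_ ?_ ?_ ?_ ?_
  · rw [fEval]; simp only [pt_apply_zero, pt_apply_one]
    have : (-1:ℝ) * (-1) + (-S3) * (-S3) = 1 + S3 * S3 := by ring
    rw [this]; positivity
  · rw [dir_hi_zero]
    simp only [Set.mem_insert_iff, Set.mem_singleton_iff]
    right; right; abel
  · rw [dir_lo_zero, dir_hi_zero]
    apply segment_subset_convexHull
      (show q - lam • pt (S3/2) (1/2) ∈
        ({q - lam • pt (S3/2) (1/2), q - lam • pt (S3/2) (1/2) + lam • pt (S3/2) (-(1/2)),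
          q - lam • pt (S3/2) (1/2) + lam • pt (S3/2) (1/2)} : Set E) from Set.mem_insert _ _)
      (show q - lam • pt (S3/2) (1/2) + lam • pt (S3/2) (-(1/2)) ∈
        ({q - lam • pt (S3/2) (1/2), q - lam • pt (S3/2) (1/2) + lam • pt (S3/2) (-(1/2)),
          q - lam • pt (S3/2) (1/2) + lam • pt (S3/2) (1/2)} : Set E) by simp)
    refine ⟨-2*(p 0 - q 0)/(S3*lam), 1 - -2*(p 0 - q 0)/(S3*lam), ?_, ?_, by ring, ?_⟩
    · exact div_nonneg (by linarith) hSlam.le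
    · rw [sub_nonneg, div_le_one hSlam]; linarith [e1]
    · refine (vec_eq_iff _ _).mpr ⟨?_, ?_⟩
      · simp only [PiLp.add_apply, PiLp.sub_apply, PiLp.smul_apply, pt_apply_zero, smul_eq_mul]
        field_simp
        ring
      · simp only [PiLp.add_apply, PiLp.sub_apply, PiLp.smul_apply, pt_apply_one, smul_eq_mul]
        field_simp
        linear_combination (-2*lam) * e1
  · apply norm_sub_le_norm_sub
    have c0 : (q - lam • pt (S3/2) (1/2)) 0 - p 0 = (S3*(p 1 - q 1) - (p 0 - q 0))/2 := by
      simp only [PiLp.sub_apply, PiLp.smul_apply, pt_apply_zero, smul_eq_mul]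
      rw [hlam_def]; linear_combination ((p 0 - q 0)/6) * hs
    have c1 : (q - lam • pt (S3/2) (1/2)) 1 - p 1 = (S3*(p 0 - q 0) - 3*(p 1 - q 1))/6 := by
      simp only [PiLp.sub_apply, PiLp.smul_apply, pt_apply_one, smul_eq_mul]
      rw [hlam_def]; ring
    rw [c0, c1]
    nlinarith [hA, hB, mul_nonneg (mul_nonneg hs0.le (neg_nonneg.mpr h2)) (neg_nonneg.mpr hw1np)]
  · rw [dir_lo_zero]
    apply norm_sub_le_norm_sub
    have c0 : (q - lam • pt (S3/2) (1/2) + lam • pt (S3/2) (-(1/2))) 0 - p 0 = -(p 0 - q 0) := by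
      simp only [PiLp.add_apply, PiLp.sub_apply, PiLp.smul_apply, pt_apply_zero, smul_eq_mul]
      ring
    have c1 : (q - lam • pt (S3/2) (1/2) + lam • pt (S3/2) (-(1/2))) 1 - p 1
        = S3*(p 0 - q 0)/3 := by
      simp only [PiLp.add_apply, PiLp.sub_apply, PiLp.smul_apply, pt_apply_one, smul_eq_mul]
      rw [hlam_def]; ring
    rw [c0, c1]
    nlinarith [hA, hB, mul_self_le_mul_self (neg_nonneg.mpr h2) (by linarith : -(p 0 - q 0) ≤ -(S3*(p 1 - q 1)))]
  · rw [dir_hi_zero]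
    have hqq : q - lam • pt (S3/2) (1/2) + lam • pt (S3/2) (1/2) = q := by abel
    rw [hqq]
    exact le_of_eq (norm_sub_rev q p)
  · rw [fEval, fEval]
    have c0 : (q - lam • pt (S3/2) (1/2)) 0 - p 0 = (S3*(p 1 - q 1) - (p 0 - q 0))/2 := by
      simp only [PiLp.sub_apply, PiLp.smul_apply, pt_apply_zero, smul_eq_mul]
      rw [hlam_def]; linear_combination ((p 0 - q 0)/6) * hs
    have c1 : (q - lam • pt (S3/2) (1/2)) 1 - p 1 = (S3*(p 0 - q 0) - 3*(p 1 - q 1))/6 := by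
      simp only [PiLp.sub_apply, PiLp.smul_apply, pt_apply_one, smul_eq_mul]
      rw [hlam_def]; ring
    have c1' : S3 * ((q - lam • pt (S3/2) (1/2)) 1)
        = S3 * p 1 + (S3^2*(p 0 - q 0) - 3*S3*(p 1 - q 1))/6 := by
      linear_combination S3 * c1
    linarith [c0, c1', hB2]
  · rw [dir_lo_zero, fEval, fEval]
    have c0 : (q - lam • pt (S3/2) (1/2) + lam • pt (S3/2) (-(1/2))) 0 - p 0 = -(p 0 - q 0) := by
      simp only [PiLp.add_apply, PiLp.sub_apply, PiLp.smul_apply, pt_apply_zero, smul_eq_mul]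
      ring
    have c1 : (q - lam • pt (S3/2) (1/2) + lam • pt (S3/2) (-(1/2))) 1 - p 1
        = S3*(p 0 - q 0)/3 := by
      simp only [PiLp.add_apply, PiLp.sub_apply, PiLp.smul_apply, pt_apply_one, smul_eq_mul]
      rw [hlam_def]; ring
    have c1' : S3 * ((q - lam • pt (S3/2) (1/2) + lam • pt (S3/2) (-(1/2))) 1)
        = S3 * p 1 + S3^2*(p 0 - q 0)/3 := by
      linear_combination S3 * c1
    linarith [c0, c1', hB2]
  · rw [dir_hi_zero]
    have hqq : q - lam • pt (S3/2) (1/2) + lam • pt (S3/2) (1/2) = q := by abel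
    rw [hqq, fEval, fEval]
    nlinarith [mul_nonneg hs0.le (neg_nonneg.mpr hw1np)]

set_option maxHeartbeats 1600000 in
lemma caseK6 (P : Finset E) (p q : E) (hp : p ∈ P) (hq : q ∈ P) (hne : q ≠ p)
    (hmin : ∀ r ∈ P, r ≠ p → ‖p - q‖ ≤ ‖p - r‖)
    (h1 : 0 ≤ p 0 - q 0) (h2 : S3 * (p 1 - q 1) ≤ -(p 0 - q 0)) :
    EDT P 1 p q := by
  have hs := S3_sq
  have hs0 := S3_pos
  have hwne : ¬ (p 0 - q 0 = 0 ∧ p 1 - q 1 = 0) := by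
    rintro ⟨a, b⟩
    apply hne
    have h : p - q = 0 := (vec_eq_zero_iff _).mpr ⟨by simpa using a, by simpa using b⟩
    exact (sub_eq_zero.mp h).symm
  have hw1np : p 1 - q 1 ≤ 0 := by
    by_contra hc
    push_neg at hc
    nlinarith [mul_pos hs0 hc]
  set lam : ℝ := S3 * (p 0 - q 0) / 3 - (p 1 - q 1) with hlam_def
  clear_value lam
  have hlamnn : 0 ≤ lam := by
    rw [hlam_def]; nlinarith [mul_nonneg hs0.le h1]
  have hlam : 0 < lam := by
    rcases eq_or_lt_of_le hlamnn with h | h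
    · exfalso
      apply hwne
      rw [hlam_def] at h
      have hS30 : S3 * (p 0 - q 0) = 0 := by
        nlinarith [mul_nonneg hs0.le h1]
      have hw1 : p 1 - q 1 = 0 := by
        nlinarith [mul_nonneg hs0.le h1]
      exact ⟨(mul_eq_zero.mp hS30).resolve_left hs0.ne', hw1⟩
    · exact h
  have hSlam : 0 < S3 * lam := mul_pos hs0 hlam
  have e1 : S3 * lam = (p 0 - q 0) - S3 * (p 1 - q 1) := by
    rw [hlam_def]; linear_combination ((p 0 - q 0) / 3) * hs
  have hA : S3^2 * (p 1 - q 1)^2 = 3 * (p 1 - q 1)^2 := by linear_combination (p 1 - q 1)^2 * hs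
  have hB : S3^2 * (p 0 - q 0)^2 = 3 * (p 0 - q 0)^2 := by linear_combination (p 0 - q 0)^2 * hs
  have hB2 : S3^2 * (p 0 - q 0) = 3 * (p 0 - q 0) := by linear_combination (p 0 - q 0) * hs
  refine edt_of_data P p q hp hq hne hmin 1 (q - lam • pt 0 1) lam hlam
      ((1:ℝ) • EuclideanSpace.proj (0 : Fin 2) + (-S3) • EuclideanSpace.proj (1 : Fin 2))
      (pt 1 (-S3)) ?_ ?_ ?_ ?_ ?_ ?_ ?_ ?_ ?_
  · rw [fEval]; simp only [pt_apply_zero, pt_apply_one]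
    have : (1:ℝ) * 1 + (-S3) * (-S3) = 1 + S3 * S3 := by ring
    rw [this]; positivity
  · rw [dir_hi_one]
    simp only [Set.mem_insert_iff, Set.mem_singleton_iff]
    right; right; abel
  · rw [dir_lo_one, dir_hi_one]
    apply segment_subset_convexHull
      (show q - lam • pt 0 1 ∈
        ({q - lam • pt 0 1, q - lam • pt 0 1 + lam • pt (S3/2) (1/2),
          q - lam • pt 0 1 + lam • pt 0 1} : Set E) from Set.mem_insert _ _)
      (show q - lam • pt 0 1 + lam • pt (S3/2) (1/2) ∈
        ({q - lam • pt 0 1, q - lam • pt 0 1 + lam • pt (S3/2) (1/2),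
          q - lam • pt 0 1 + lam • pt 0 1} : Set E) by simp)
    refine ⟨1 - 2*(p 0 - q 0)/(S3*lam), 2*(p 0 - q 0)/(S3*lam), ?_, ?_, by ring, ?_⟩
    · rw [sub_nonneg, div_le_one hSlam]; linarith [e1]
    · exact div_nonneg (by linarith) hSlam.le
    · refine (vec_eq_iff _ _).mpr ⟨?_, ?_⟩
      · simp only [PiLp.add_apply, PiLp.sub_apply, PiLp.smul_apply, pt_apply_zero, smul_eq_mul]
        field_simp
        ring
      · simp only [PiLp.add_apply, PiLp.sub_apply, PiLp.smul_apply, pt_apply_one, smul_eq_mul]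
        field_simp
        linear_combination (-lam) * e1
  · apply norm_sub_le_norm_sub
    have c0 : (q - lam • pt 0 1) 0 - p 0 = -(p 0 - q 0) := by
      simp only [PiLp.sub_apply, PiLp.smul_apply, pt_apply_zero, smul_eq_mul]; ring
    have c1 : (q - lam • pt 0 1) 1 - p 1 = -(S3*(p 0 - q 0))/3 := by
      simp only [PiLp.sub_apply, PiLp.smul_apply, pt_apply_one, smul_eq_mul]
      rw [hlam_def]; ring
    rw [c0, c1]
    nlinarith [hA, hB, mul_self_le_mul_self h1 (by linarith : p 0 - q 0 ≤ -(S3*(p 1 - q 1)))]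
  · rw [dir_lo_one]
    apply norm_sub_le_norm_sub
    have c0 : (q - lam • pt 0 1 + lam • pt (S3/2) (1/2)) 0 - p 0
        = -((p 0 - q 0) + S3*(p 1 - q 1))/2 := by
      simp only [PiLp.add_apply, PiLp.sub_apply, PiLp.smul_apply, pt_apply_zero, smul_eq_mul]
      rw [hlam_def]; linear_combination ((p 0 - q 0)/6) * hs
    have c1 : (q - lam • pt 0 1 + lam • pt (S3/2) (1/2)) 1 - p 1
        = -(S3*(p 0 - q 0) + 3*(p 1 - q 1))/6 := by
      simp only [PiLp.add_apply, PiLp.sub_apply, PiLp.smul_apply, pt_apply_one, smul_eq_mul]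
      rw [hlam_def]; ring
    rw [c0, c1]
    nlinarith [hA, hB, mul_nonneg (mul_nonneg hs0.le h1) (neg_nonneg.mpr hw1np)]
  · rw [dir_hi_one]
    have hqq : q - lam • pt 0 1 + lam • pt 0 1 = q := by abel
    rw [hqq]
    exact le_of_eq (norm_sub_rev q p)
  · rw [fEval, fEval]
    have c0 : (q - lam • pt 0 1) 0 - p 0 = -(p 0 - q 0) := by
      simp only [PiLp.sub_apply, PiLp.smul_apply, pt_apply_zero, smul_eq_mul]; ring
    have c1 : (q - lam • pt 0 1) 1 - p 1 = -(S3*(p 0 - q 0))/3 := by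
      simp only [PiLp.sub_apply, PiLp.smul_apply, pt_apply_one, smul_eq_mul]
      rw [hlam_def]; ring
    have c1' : S3 * ((q - lam • pt 0 1) 1) = S3 * p 1 + (-(S3^2*(p 0 - q 0))/3) := by
      linear_combination S3 * c1
    linarith [c0, c1', hB2]
  · rw [dir_lo_one, fEval, fEval]
    have c0 : (q - lam • pt 0 1 + lam • pt (S3/2) (1/2)) 0 - p 0
        = -((p 0 - q 0) + S3*(p 1 - q 1))/2 := by
      simp only [PiLp.add_apply, PiLp.sub_apply, PiLp.smul_apply, pt_apply_zero, smul_eq_mul]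
      rw [hlam_def]; linear_combination ((p 0 - q 0)/6) * hs
    have c1 : (q - lam • pt 0 1 + lam • pt (S3/2) (1/2)) 1 - p 1
        = -(S3*(p 0 - q 0) + 3*(p 1 - q 1))/6 := by
      simp only [PiLp.add_apply, PiLp.sub_apply, PiLp.smul_apply, pt_apply_one, smul_eq_mul]
      rw [hlam_def]; ring
    have c1' : S3 * ((q - lam • pt 0 1 + lam • pt (S3/2) (1/2)) 1)
        = S3 * p 1 + (-(S3^2*(p 0 - q 0) + 3*S3*(p 1 - q 1))/6) := by
      linear_combination S3 * c1
    linarith [c0, c1', hB2]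
  · rw [dir_hi_one]
    have hqq : q - lam • pt 0 1 + lam • pt 0 1 = q := by abel
    rw [hqq, fEval, fEval]
    nlinarith [mul_nonneg hs0.le (neg_nonneg.mpr hw1np)]

/-- if `q` is a nearest neighbor of `p` in `P`, then there exist `l ∈ {0,1}`
and an `l`-tri, empty with respect to `P`, with both `p` and `q` on its boundary; i.e.,
the Equilateral Delaunay graph is a supergraph of the nearest neighbor graph. -/
theorem EDG_supergraph_of_nearestNeighborGraph
    (P : Finset E) (p q : E) (hp : p ∈ P) (hq : q ∈ P) (hne : q ≠ p)
    (hmin : ∀ r ∈ P, r ≠ p → ‖p - q‖ ≤ ‖p - r‖) : EDG P p q := by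
  show EDT P 0 p q ∨ EDT P 1 p q
  rcases le_total (S3 * (p 1 - q 1)) (p 0 - q 0) with hA | hA
  · rcases le_total (-(S3 * (p 1 - q 1))) (p 0 - q 0) with hB | hB
    · exact Or.inl (caseK1 P p q hp hq hne hmin hA hB)
    · rcases le_total 0 (p 0 - q 0) with hC | hC
      · exact Or.inr (caseK6 P p q hp hq hne hmin hC (by linarith))
      · exact Or.inl (caseK5 P p q hp hq hne hmin hA hC)
  · rcases le_total (-(S3 * (p 1 - q 1))) (p 0 - q 0) with hB | hB
    · rcases le_total 0 (p 0 - q 0) with hC | hC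
      · exact Or.inr (caseK2 P p q hp hq hne hmin hA hC)
      · exact Or.inl (caseK3 P p q hp hq hne hmin hB hC)
    · exact Or.inr (caseK4 P p q hp hq hne hmin hA hB)
end
end

section
/- Let P ⊆ ℝ² be finite, p ∈ P, l ∈ {0,…,5}, and let q ∈ V_l(p) satisfy ‖p − q‖ = min_{r ∈ V_l(p)} ‖p − r‖. Then the set S = {p} ∪ {x ∈ closure(W_l(p)) : ‖x − p‖ ≤ ‖q − p‖} is an l-pie (namely S = p + ‖q − p‖·σ_l) that is empty with respect to P and has both p and q on its boundary. Consequently, every edge of the Yao graph YG(P) is an edge of the Pie Delaunay graph PDG(P). -/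
/- Common geometric setup: the Euclidean plane, wedges `W_l`, bisectors `b_l`,
equilateral triangles `∆_l` and `l`-tri's, circular sectors `σ_l` and `l`-pies,
and the proximity graphs (Semi-Yao, nearest-neighbor, Equilateral/Pie Delaunay,
Yao) together with Euclidean minimum spanning trees. -/

open Real EuclideanGeometry
open scoped RealInnerProductSpace

noncomputable section

namespace YaoAux

/-- Outward normal of the lower wedge boundary. -/
def uvec (l : Fin 6) : E := dir (lo l + π/2)
/-- Outward normal of the upper wedge boundary. -/
def vvec (l : Fin 6) : E := dir (hi l - π/2)

/-- The closed cone over the closed angular interval `[lo l, hi l]`. -/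
def Acone (l : Fin 6) : Set E :=
  {x | x = 0 ∨ ∃ θ : ℝ, lo l ≤ θ ∧ θ ≤ hi l ∧ x = ‖x‖ • dir θ}

/-- Half-plane description of the closed wedge. -/
def Kcone (l : Fin 6) : Set E := {x | 0 ≤ ⟪x, uvec l⟫ ∧ 0 ≤ ⟪x, vvec l⟫}

lemma pt_apply_zero (a b : ℝ) : pt a b 0 = a := by simp [pt]
lemma pt_apply_one (a b : ℝ) : pt a b 1 = b := by simp [pt]

lemma hi_sub_lo (l : Fin 6) : hi l - lo l = π/3 := by
  simp only [hi, lo]; ring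

lemma norm_eq_abs (x : E) : ‖x‖ = ‖(⟨x 0, x 1⟩ : ℂ)‖ := by
  rw [EuclideanSpace.norm_eq, Complex.norm_def, Complex.normSq_mk, Fin.sum_univ_two]
  simp [sq]

lemma smul_dir_apply (r θ : ℝ) :
    (r • dir θ) 0 = r * Real.cos θ ∧ (r • dir θ) 1 = r * Real.sin θ := by
  constructor <;> simp [dir, pt]

lemma polar (x : E) (hx : x ≠ 0) (c : ℝ) :
    ∃ θ : ℝ, θ ∈ Set.Ico c (c + 2*π) ∧ x = ‖x‖ • dir θ := by
  set z : ℂ := ⟨x 0, x 1⟩ with hz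
  have hzne : z ≠ 0 := by
    intro h
    apply hx
    have h0 : x 0 = 0 := congrArg Complex.re h
    have h1 : x 1 = 0 := congrArg Complex.im h
    ext i; fin_cases i <;> simpa
  have habs : ‖x‖ = ‖z‖ := norm_eq_abs x
  have habs_pos : (0:ℝ) < ‖z‖ := norm_pos_iff.mpr hzne
  refine ⟨toIcoMod Real.two_pi_pos c z.arg, toIcoMod_mem_Ico _ _ _, ?_⟩
  have hrep : toIcoMod Real.two_pi_pos c z.arg
      = z.arg - (toIcoDiv Real.two_pi_pos c z.arg : ℤ) * (2*π) := by
    rw [toIcoMod]; push_cast [zsmul_eq_mul]; ring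
  have hcos : Real.cos (toIcoMod Real.two_pi_pos c z.arg) = Real.cos z.arg := by
    rw [hrep]; exact Real.cos_sub_int_mul_two_pi _ _
  have hsin : Real.sin (toIcoMod Real.two_pi_pos c z.arg) = Real.sin z.arg := by
    rw [hrep]
    exact Real.sin_periodic.sub_int_mul_eq (n := toIcoDiv Real.two_pi_pos c z.arg)
  ext i
  fin_cases i
  · show x 0 = (‖x‖ • dir _) 0
    rw [(smul_dir_apply _ _).1, hcos, Complex.cos_arg hzne, habs]
    field_simp
    rfl
  · show x 1 = (‖x‖ • dir _) 1
    rw [(smul_dir_apply _ _).2, hsin, Complex.sin_arg z, habs]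
    field_simp
    rfl

lemma inner_dir_dir (θ φ : ℝ) : ⟪dir θ, dir φ⟫ = Real.cos (θ - φ) := by
  simp only [dir, pt, PiLp.inner_apply, Fin.sum_univ_two]
  simp [Real.cos_sub, RCLike.inner_apply, mul_comm]

lemma inner_smul_dir (r θ φ : ℝ) : ⟪(r • dir θ : E), dir φ⟫ = r * Real.cos (θ - φ) := by
  rw [real_inner_smul_left, inner_dir_dir]

lemma norm_dir (θ : ℝ) : ‖dir θ‖ = 1 := by
  rw [dir, pt, EuclideanSpace.norm_eq, Fin.sum_univ_two]
  simp only [WithLp.equiv_symm_apply, PiLp.toLp_apply, Matrix.cons_val_zero, Matrix.cons_val_one,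
    Matrix.head_cons, Real.norm_eq_abs, sq_abs]
  rw [Real.cos_sq_add_sin_sq, Real.sqrt_one]

lemma dir_ne_zero (θ : ℝ) : dir θ ≠ 0 := by
  intro h; have := norm_dir θ; rw [h] at this; simp at this

lemma norm_smul_dir (r θ : ℝ) (hr : 0 ≤ r) : ‖r • dir θ‖ = r := by
  rw [norm_smul, norm_dir, Real.norm_eq_abs, abs_of_nonneg hr, mul_one]

lemma continuous_dir : Continuous dir := by
  apply (PiLp.continuous_toLp 2 (fun _ : Fin 2 => ℝ)).comp
  apply continuous_pi
  intro i
  fin_cases i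
  · simpa using Real.continuous_cos
  · simpa using Real.continuous_sin

lemma inner_uv (l : Fin 6) (x : E) (θ : ℝ) (hx : x = ‖x‖ • dir θ) :
    ⟪x, uvec l⟫ = ‖x‖ * Real.sin (θ - lo l) ∧
    ⟪x, vvec l⟫ = ‖x‖ * Real.sin (hi l - θ) := by
  constructor
  · conv_lhs => rw [hx]
    rw [uvec, inner_smul_dir, show θ - (lo l + π/2) = -(π/2 - (θ - lo l)) by ring,
      Real.cos_neg, Real.cos_pi_div_two_sub]
  · conv_lhs => rw [hx]
    rw [vvec, inner_smul_dir, show θ - (hi l - π/2) = π/2 - (hi l - θ) by ring,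
      Real.cos_pi_div_two_sub]

end YaoAux
namespace YaoAux

lemma sin_pi_div_three_pos : 0 < Real.sin (π/3) :=
  Real.sin_pos_of_pos_of_lt_pi (by positivity) (by linarith [Real.pi_pos])

lemma mem_Acone_of_inner (l : Fin 6) (x : E)
    (hu : 0 ≤ ⟪x, uvec l⟫) (hv : 0 ≤ ⟪x, vvec l⟫) : x ∈ Acone l := by
  by_cases hx0 : x = 0
  · exact Or.inl hx0
  obtain ⟨θ, hθmem, hx⟩ := polar x hx0 (lo l - π)
  have hnorm : (0:ℝ) < ‖x‖ := norm_pos_iff.mpr hx0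
  obtain ⟨hiu, hiv⟩ := inner_uv l x θ hx
  have h1 : 0 ≤ Real.sin (θ - lo l) := by
    rw [hiu] at hu; exact nonneg_of_mul_nonneg_right hu hnorm
  have h2 : 0 ≤ Real.sin (hi l - θ) := by
    rw [hiv] at hv; exact nonneg_of_mul_nonneg_right hv hnorm
  have hsl : hi l - lo l = π/3 := hi_sub_lo l
  have hθ1 : lo l - π ≤ θ := hθmem.1
  have hθ2 : θ < lo l - π + 2*π := hθmem.2
  have hθlo : lo l ≤ θ := by
    rcases eq_or_lt_of_le hθ1 with heq | hlt
    · exfalso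
      have : hi l - θ = π/3 + π := by rw [← heq]; linarith
      rw [this, Real.sin_add_pi] at h2
      linarith [sin_pi_div_three_pos]
    · by_contra hcon
      push_neg at hcon
      have : Real.sin (θ - lo l) < 0 :=
        Real.sin_neg_of_neg_of_neg_pi_lt (by linarith) (by linarith)
      linarith
  have hθhi : θ ≤ hi l := by
    by_contra hcon
    push_neg at hcon
    have : Real.sin (hi l - θ) < 0 :=
      Real.sin_neg_of_neg_of_neg_pi_lt (by linarith) (by linarith [Real.pi_pos])
    linarith
  exact Or.inr ⟨θ, hθlo, hθhi, hx⟩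

lemma Acone_eq_Kcone (l : Fin 6) : Acone l = Kcone l := by
  ext x
  constructor
  · rintro (rfl | ⟨θ, h1, h2, hx⟩)
    · constructor <;> simp
    · obtain ⟨hiu, hiv⟩ := inner_uv l x θ hx
      have hsl : hi l - lo l = π/3 := hi_sub_lo l
      constructor
      · rw [hiu]
        exact mul_nonneg (norm_nonneg x)
          (Real.sin_nonneg_of_nonneg_of_le_pi (by linarith) (by linarith [Real.pi_pos]))
      · rw [hiv]
        exact mul_nonneg (norm_nonneg x)
          (Real.sin_nonneg_of_nonneg_of_le_pi (by linarith) (by linarith [Real.pi_pos]))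
  · exact fun h => mem_Acone_of_inner l x h.1 h.2

lemma wedge_eq (l : Fin 6) :
    wedge l = {x | x ≠ 0 ∧ 0 ≤ ⟪x, uvec l⟫ ∧ 0 < ⟪x, vvec l⟫} := by
  ext x
  constructor
  · rintro ⟨hx0, θ, h1, h2, hx⟩
    obtain ⟨hiu, hiv⟩ := inner_uv l x θ hx
    have hsl : hi l - lo l = π/3 := hi_sub_lo l
    refine ⟨hx0, ?_, ?_⟩
    · rw [hiu]
      exact mul_nonneg (norm_nonneg x)
        (Real.sin_nonneg_of_nonneg_of_le_pi (by linarith) (by linarith [Real.pi_pos]))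
    · rw [hiv]
      exact mul_pos (norm_pos_iff.mpr hx0)
        (Real.sin_pos_of_pos_of_lt_pi (by linarith) (by linarith [Real.pi_pos]))
  · rintro ⟨hx0, hu, hv⟩
    rcases mem_Acone_of_inner l x hu hv.le with rfl | ⟨θ, h1, h2, hx⟩
    · exact absurd rfl hx0
    rcases lt_or_eq_of_le h2 with hlt | heq
    · exact ⟨hx0, θ, h1, hlt, hx⟩
    · exfalso
      have := (inner_uv l x θ hx).2
      rw [heq, sub_self, Real.sin_zero, mul_zero] at this
      rw [this] at hv
      exact lt_irrefl 0 hv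

end YaoAux
namespace YaoAux

lemma isClosed_Kcone (l : Fin 6) : IsClosed (Kcone l) := by
  have hc : ∀ w : E, Continuous fun x : E => ⟪x, w⟫ :=
    fun w => continuous_id.inner continuous_const
  have : Kcone l = {x : E | 0 ≤ ⟪x, uvec l⟫} ∩ {x : E | 0 ≤ ⟪x, vvec l⟫} := rfl
  rw [this]
  exact (isClosed_le continuous_const (hc _)).inter (isClosed_le continuous_const (hc _))

lemma wedge_subset_Kcone (l : Fin 6) : wedge l ⊆ Kcone l := by
  rw [wedge_eq]
  rintro x ⟨_, hu, hv⟩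
  exact ⟨hu, hv.le⟩

lemma wedge_subset_Acone (l : Fin 6) : wedge l ⊆ Acone l := by
  rw [Acone_eq_Kcone]; exact wedge_subset_Kcone l

lemma lo_lt_hi (l : Fin 6) : lo l < hi l := by
  have := hi_sub_lo l
  have := Real.pi_pos
  linarith

lemma closure_wedge (l : Fin 6) : closure (wedge l) = Kcone l := by
  apply Set.Subset.antisymm
  · exact closure_minimal (wedge_subset_Kcone l) (isClosed_Kcone l)
  · intro x hx
    by_cases hx0 : x = 0
    · subst hx0
      have hmem : ∀ n : ℕ, ((1:ℝ)/(n+1)) • dir (lo l) ∈ wedge l := by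
        intro n
        have hpos : (0:ℝ) < 1/(n+1) := by positivity
        refine ⟨?_, lo l, le_refl _, lo_lt_hi l, ?_⟩
        · intro h
          have := norm_smul_dir (1/(n+1)) (lo l) hpos.le
          rw [h, norm_zero] at this
          linarith
        · rw [norm_smul_dir _ _ hpos.le]
      have htend : Filter.Tendsto (fun n : ℕ => ((1:ℝ)/(n+1)) • dir (lo l))
          Filter.atTop (nhds 0) := by
        have := (tendsto_one_div_add_atTop_nhds_zero_nat (𝕜 := ℝ)).smul_const (dir (lo l))
        simpa using this
      exact mem_closure_of_tendsto htend (Filter.Eventually.of_forall hmem)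
    · rw [← Acone_eq_Kcone] at hx
      rcases hx with rfl | ⟨θ, h1, h2, hxe⟩
      · exact absurd rfl hx0
      rcases lt_or_eq_of_le h2 with hlt | heq
      · exact subset_closure ⟨hx0, θ, h1, hlt, hxe⟩
      · rw [heq] at hxe
        clear h1 h2
        have hnorm : (0:ℝ) < ‖x‖ := norm_pos_iff.mpr hx0
        have hmem : ∀ n : ℕ, ‖x‖ • dir (hi l - (π/3) * (1/(n+1))) ∈ wedge l := by
          intro n
          have hpos : (0:ℝ) < 1/(n+1) := by positivity
          have hle : (1:ℝ)/(n+1) ≤ 1 := by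
            rw [div_le_one (by positivity)]
            linarith [Nat.cast_nonneg (α := ℝ) n]
          have hsl : hi l - lo l = π/3 := hi_sub_lo l
          have hpi : (0:ℝ) < π/3 := by positivity
          refine ⟨?_, hi l - (π/3) * (1/(n+1)), ?_, ?_, ?_⟩
          · intro h
            have := norm_smul_dir ‖x‖ (hi l - (π/3) * (1/(n+1))) (norm_nonneg x)
            rw [h, norm_zero] at this
            linarith
          · nlinarith
          · nlinarith
          · rw [norm_smul_dir _ _ (norm_nonneg x)]
        have htend : Filter.Tendsto (fun n : ℕ => ‖x‖ • dir (hi l - (π/3) * (1/(n+1))))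
            Filter.atTop (nhds x) := by
          have ha : Filter.Tendsto (fun n : ℕ => hi l - (π/3) * (1/(n+1)))
              Filter.atTop (nhds (hi l)) := by
            have := (tendsto_one_div_add_atTop_nhds_zero_nat.const_mul (π/3)).const_sub (hi l)
            simpa using this
          have hb := ((continuous_dir.tendsto (hi l)).comp ha).const_smul ‖x‖
          rw [← hxe] at hb
          exact hb
        exact mem_closure_of_tendsto htend (Filter.Eventually.of_forall hmem)

lemma halfplane_pos (w x : E) (hw : ‖w‖ = 1) (ε : ℝ) (hε : 0 < ε)
    (h : Metric.ball x ε ⊆ {y : E | 0 ≤ ⟪y, w⟫}) : 0 < ⟪x, w⟫ := by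
  have hy : x - (ε/2) • w ∈ Metric.ball x ε := by
    rw [Metric.mem_ball, dist_eq_norm]
    simp only [sub_sub_cancel_left, norm_neg]
    rw [norm_smul, hw, Real.norm_eq_abs, abs_of_pos (by linarith), mul_one]
    linarith
  have h2 := h hy
  simp only [Set.mem_setOf_eq, inner_sub_left, real_inner_smul_left,
    real_inner_self_eq_norm_sq, hw] at h2
  nlinarith


lemma interior_Kcone_subset (l : Fin 6) : interior (Kcone l) ⊆ wedge l := by
  intro x hx
  obtain ⟨ε, hε, hball⟩ := Metric.isOpen_iff.mp isOpen_interior x hx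
  have hsub : Metric.ball x ε ⊆ Kcone l := hball.trans interior_subset
  have hu : 0 < ⟪x, uvec l⟫ :=
    halfplane_pos (uvec l) x (norm_dir _) ε hε (fun y hy => (hsub hy).1)
  have hv : 0 < ⟪x, vvec l⟫ :=
    halfplane_pos (vvec l) x (norm_dir _) ε hε (fun y hy => (hsub hy).2)
  rw [wedge_eq]
  refine ⟨?_, hu.le, hv⟩
  intro h
  rw [h, inner_zero_left] at hu
  exact lt_irrefl 0 hu

lemma smul_mem_Acone (l : Fin 6) (x : E) (c : ℝ) (hc : 0 ≤ c) (hx : x ∈ Acone l) :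
    c • x ∈ Acone l := by
  rcases hx with rfl | ⟨θ, h1, h2, hxe⟩
  · left; simp
  · right
    refine ⟨θ, h1, h2, ?_⟩
    conv_lhs => rw [hxe]
    rw [smul_smul, norm_smul, Real.norm_eq_abs, abs_of_nonneg hc]

lemma lPie_eq (l : Fin 6) (p : E) (lam : ℝ) (hlam : 0 < lam) :
    lPie l p lam = {y | ‖y - p‖ ≤ lam ∧ y - p ∈ Acone l} := by
  ext y
  constructor
  · rintro ⟨x, ⟨hx1, hx2⟩, rfl⟩
    have hyp : p + lam • x - p = lam • x := by abel
    constructor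
    · rw [hyp, norm_smul, Real.norm_eq_abs, abs_of_pos hlam]
      calc lam * ‖x‖ ≤ lam * 1 := by
            exact mul_le_mul_of_nonneg_left hx1 hlam.le
        _ = lam := mul_one lam
    · rw [hyp]
      exact smul_mem_Acone l x lam hlam.le hx2
  · rintro ⟨h1, h2⟩
    refine ⟨lam⁻¹ • (y - p), ⟨?_, ?_⟩, ?_⟩
    · rw [norm_smul, Real.norm_eq_abs, abs_of_pos (by positivity)]
      rw [inv_mul_le_iff₀ hlam, mul_one]
      exact h1
    · have := smul_mem_Acone l (y - p) lam⁻¹ (by positivity) h2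
      rcases this with h | h
      · exact Or.inl h
      · exact Or.inr h
    · show p + lam • (lam⁻¹ • (y - p)) = y
      rw [smul_inv_smul₀ hlam.ne']
      abel

end YaoAux
namespace YaoAux

lemma closure_wedgeAt (l : Fin 6) (p : E) :
    closure (wedgeAt l p) = {x : E | x - p ∈ Acone l} := by
  have hwAt : wedgeAt l p = (Homeomorph.subRight p) ⁻¹' (wedge l) := rfl
  rw [hwAt, ← Homeomorph.preimage_closure, closure_wedge, ← Acone_eq_Kcone]
  rfl

lemma master (P : Finset E) (p q : E) (l : Fin 6)
    (hq : q ∈ Vl P l p) (hmin : ∀ r ∈ Vl P l p, ‖p - q‖ ≤ ‖p - r‖) :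
    ({p} ∪ {x ∈ closure (wedgeAt l p) | ‖x - p‖ ≤ ‖q - p‖}) = lPie l p ‖q - p‖ ∧
    (∀ r ∈ P, r ∉ interior (lPie l p ‖q - p‖)) ∧
    p ∈ frontier (lPie l p ‖q - p‖) ∧ q ∈ frontier (lPie l p ‖q - p‖) := by
  have hqw : q - p ∈ wedge l := hq.2
  have hq0 : q - p ≠ 0 := hqw.1
  have hlam : 0 < ‖q - p‖ := norm_pos_iff.mpr hq0
  have hPie := lPie_eq l p ‖q - p‖ hlam
  -- interior is contained in the open truncated wedge
  have hint : interior (lPie l p ‖q - p‖) ⊆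
      {y : E | y - p ∈ wedge l ∧ ‖y - p‖ < ‖q - p‖} := by
    intro y hy
    constructor
    · have hsub : lPie l p ‖q - p‖ ⊆ (Homeomorph.subRight p) ⁻¹' (Kcone l) := by
        rw [hPie]
        intro x hx
        have : x - p ∈ Acone l := hx.2
        rw [Acone_eq_Kcone] at this
        exact this
      have h1 := interior_mono hsub hy
      rw [← Homeomorph.preimage_interior] at h1
      exact interior_Kcone_subset l h1
    · have hsub : lPie l p ‖q - p‖ ⊆ Metric.closedBall p ‖q - p‖ := by
        rw [hPie]
        intro x hx
        rw [Metric.mem_closedBall, dist_eq_norm]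
        exact hx.1
      have h1 := interior_mono hsub hy
      rw [interior_closedBall p hlam.ne'] at h1
      rw [Metric.mem_ball, dist_eq_norm] at h1
      exact h1
  -- the set equality
  have hSeq : ({p} ∪ {x ∈ closure (wedgeAt l p) | ‖x - p‖ ≤ ‖q - p‖})
      = lPie l p ‖q - p‖ := by
    rw [hPie]
    ext x
    simp only [Set.mem_union, Set.mem_singleton_iff, Set.mem_sep_iff,
      closure_wedgeAt, Set.mem_setOf_eq]
    constructor
    · rintro (rfl | ⟨hx1, hx2⟩)
      · exact ⟨by simp [hlam.le], by rw [sub_self]; exact Or.inl rfl⟩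
      · exact ⟨hx2, hx1⟩
    · rintro ⟨h1, h2⟩
      exact Or.inr ⟨h2, h1⟩
  -- closedness
  have hclosed : IsClosed (lPie l p ‖q - p‖) := by
    rw [hPie]
    have heq : {y : E | ‖y - p‖ ≤ ‖q - p‖ ∧ y - p ∈ Acone l}
        = Metric.closedBall p ‖q - p‖ ∩ ((Homeomorph.subRight p) ⁻¹' (Kcone l)) := by
      ext y
      simp [Metric.mem_closedBall, dist_eq_norm, Acone_eq_Kcone]
    rw [heq]
    exact Metric.isClosed_closedBall.inter
      ((isClosed_Kcone l).preimage (Homeomorph.subRight p).continuous)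
  have hfront : frontier (lPie l p ‖q - p‖)
      = lPie l p ‖q - p‖ \ interior (lPie l p ‖q - p‖) := by
    rw [frontier, hclosed.closure_eq]
  refine ⟨hSeq, ?_, ?_, ?_⟩
  · intro r hrP hrint
    obtain ⟨hw, hlt⟩ := hint hrint
    have hrV : r ∈ Vl P l p := ⟨hrP, hw⟩
    have := hmin r hrV
    rw [norm_sub_rev p q, norm_sub_rev p r] at this
    linarith
  · rw [hfront]
    constructor
    · rw [hPie]
      exact ⟨by simp [hlam.le], by rw [sub_self]; exact Or.inl rfl⟩
    · intro h
      have := (hint h).1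
      rw [sub_self] at this
      exact this.1 rfl
  · rw [hfront]
    constructor
    · rw [hPie]
      exact ⟨le_refl _, wedge_subset_Acone l hqw⟩
    · intro h
      exact lt_irrefl _ (hint h).2

end YaoAux

/-- if `q ∈ V_l(p)` is nearest to `p` in the wedge `W_l(p)`, then
`S = {p} ∪ {x ∈ closure (W_l(p)) : ‖x - p‖ ≤ ‖q - p‖}` is the `l`-pie `p + ‖q - p‖ σ_l`,
it is empty with respect to `P`, and has `p` and `q` on its boundary. Consequently every
edge of the Yao graph is an edge of the Pie Delaunay graph. -/
theorem yao_edge_gives_empty_lPie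
    (P : Finset E) (p q : E) (hp : p ∈ P) (l : Fin 6)
    (hq : q ∈ Vl P l p) (hmin : ∀ r ∈ Vl P l p, ‖p - q‖ ≤ ‖p - r‖) :
    ({p} ∪ {x ∈ closure (wedgeAt l p) | ‖x - p‖ ≤ ‖q - p‖}) = lPie l p ‖q - p‖ ∧
    (∀ r ∈ P, r ∉ interior (lPie l p ‖q - p‖)) ∧
    p ∈ frontier (lPie l p ‖q - p‖) ∧ q ∈ frontier (lPie l p ‖q - p‖) ∧
    ∀ (P' : Finset E) (a b : E), YG P' a b → PDG P' a b := by
  obtain ⟨h1, h2, h3, h4⟩ := YaoAux.master P p q l hq hmin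
  refine ⟨h1, h2, h3, h4, ?_⟩
  rintro P' a b ⟨haP, l', hbV, hmin'⟩
  obtain ⟨_, hE, hF, hG⟩ := YaoAux.master P' a b l' hbV hmin'
  have hb0 : b - a ≠ 0 := hbV.2.1
  exact ⟨l', haP, hbV.1, (sub_ne_zero.mp hb0).symm, a, ‖b - a‖,
    norm_pos_iff.mpr hb0, hF, hG, hE⟩
end
end
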